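/- arXiv:2512.01820 — 9 statements merged into one kernel-verified Lean document; each statement's English description precedes it below -/
import Mathlib

section
/- For every continuously differentiable function g : [0,T] → ℝ with g(0) = 0 and g(T) = T', one has F(g) ≥ F(g*). That is, the scheduler g*(t) = −log(1 − t·(1 − exp(−T'))/T) minimizes the functional F among all continuously differentiable schedulers on [0,T] with boundary values g(0) = 0 and g(T) = T'. -/
open Set MeasureTheory

/-- The scheduling functional `F(g) := ∫₀^T (g'(t))² · exp(−2·g(t)) dt`,
where the derivative is taken within `[0, T]`. -/
noncomputable def schedF (T : ℝ) (g : ℝ → ℝ) : ℝ :=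
  ∫ t in (0:ℝ)..T, (derivWithin g (Set.Icc 0 T) t) ^ 2 * Real.exp (-2 * g t)

/-- The scheduler `g*(t) = −log(1 − t·(1 − exp(−T'))/T)` minimizes the functional
`F` among all continuously differentiable schedulers on `[0,T]` with boundary values
`g(0) = 0` and `g(T) = T'`. -/
theorem stmt_0 (T T' : ℝ) (hT : 0 < T) (hT' : 0 < T')
    (gstar : ℝ → ℝ)
    (hgstar : ∀ t, gstar t = -Real.log (1 - t * (1 - Real.exp (-T')) / T))
    (g : ℝ → ℝ)
    (hg : ContDiffOn ℝ 1 g (Set.Icc 0 T))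
    (hg0 : g 0 = 0) (hgT : g T = T') :
    schedF T gstar ≤ schedF T g := by
  have ha0 : (0:ℝ) < 1 - Real.exp (-T') := by
    have : Real.exp (-T') < 1 := by
      rw [Real.exp_lt_one_iff]; linarith
    linarith
  set a : ℝ := 1 - Real.exp (-T') with ha_def
  set s : Set ℝ := Set.Icc (0:ℝ) T with hs_def
  have hs : UniqueDiffOn ℝ s := uniqueDiffOn_Icc hT
  have huIcc : Set.uIcc (0:ℝ) T = s := Set.uIcc_of_le hT.le
  -- positivity of 1 - t*a/T on s
  have hqpos : ∀ t ∈ s, 0 < 1 - t * a / T := by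
    intro t ht
    have h1 : t * a / T ≤ a := by
      rw [div_le_iff₀ hT]
      nlinarith [ht.1, ht.2, ha0.le]
    have : Real.exp (-T') ≤ 1 - t * a / T := by
      simp only [ha_def] at h1 ⊢; linarith
    linarith [Real.exp_pos (-T')]
  -- Part 1: schedF T gstar = a^2 / T
  have key1 : schedF T gstar = a ^ 2 / T := by
    unfold schedF
    rw [show Set.Icc (0:ℝ) T = s from rfl]
    rw [intervalIntegral.integral_congr (g := fun _ : ℝ => (a / T) ^ 2) ?_]
    · rw [intervalIntegral.integral_const, smul_eq_mul]
      have hT0 : T ≠ 0 := ne_of_gt hT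
      field_simp
      ring
    · intro t ht
      rw [huIcc] at ht
      have hqt := hqpos t ht
      have hne : 1 - t * a / T ≠ 0 := ne_of_gt hqt
      -- derivative of gstar
      have hq1 : HasDerivAt (fun t : ℝ => 1 - t * a / T) (-(a / T)) t := by
        have h1 : HasDerivAt (fun t : ℝ => t * (a / T)) (a / T) t :=
          hasDerivAt_mul_const (a / T)
        have h2 := (hasDerivAt_const t (1:ℝ)).sub h1
        simpa [mul_div_assoc] using h1.const_sub 1
      have hgd : HasDerivAt gstar ((a / T) / (1 - t * a / T)) t := by
        have hfun : gstar = fun t => -Real.log (1 - t * a / T) := funext hgstar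
        rw [hfun]
        have := (hq1.log hne).neg
        refine this.congr_deriv ?_
        rw [neg_div, neg_neg]
      have hdW : derivWithin gstar s t = (a / T) / (1 - t * a / T) :=
        hgd.hasDerivWithinAt.derivWithin (hs t ht)
      show derivWithin gstar s t ^ 2 * Real.exp (-2 * gstar t) = (a / T) ^ 2
      rw [hdW, hgstar t]
      have hexp : Real.exp (-2 * -Real.log (1 - t * a / T)) = (1 - t * a / T) * (1 - t * a / T) := by
        rw [show (-2:ℝ) * -Real.log (1 - t * a / T)
              = Real.log (1 - t * a / T) + Real.log (1 - t * a / T) by ring,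
            Real.exp_add, Real.exp_log hqt]
      rw [hexp]
      have hTa : 0 < T - t * a := by
        have h := mul_pos hqt hT
        rw [sub_mul, one_mul, div_mul_cancel₀ _ (ne_of_gt hT)] at h
        linarith
      have hTa' : T - a * t ≠ 0 := by nlinarith
      field_simp
  -- Part 2: schedF T g ≥ a^2 / T
  set φ : ℝ → ℝ := fun t => -(derivWithin g s t) * Real.exp (-(g t)) with hφ_def
  have hφcont : ContinuousOn φ s := by
    apply ContinuousOn.mul
    · exact (hg.continuousOn_derivWithin hs le_rfl).neg
    · exact (hg.continuousOn.neg).rexp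
  have hint1 : IntervalIntegrable φ volume 0 T := by
    apply ContinuousOn.intervalIntegrable
    rwa [huIcc]
  have hint2 : IntervalIntegrable (fun t => φ t ^ 2) volume 0 T := by
    apply ContinuousOn.intervalIntegrable
    rw [huIcc]
    exact hφcont.pow 2
  -- FTC for u = exp (-g)
  have hFTC : ∫ t in (0:ℝ)..T, φ t = Real.exp (-T') - 1 := by
    have hcontu : ContinuousOn (fun t => Real.exp (-(g t))) (Set.Icc 0 T) :=
      (hg.continuousOn.neg).rexp
    have hderiv : ∀ t ∈ Set.Ioo (0:ℝ) T,
        HasDerivWithinAt (fun t => Real.exp (-(g t))) (φ t) (Set.Ioi t) t := by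
      intro t ht
      have hmem : s ∈ nhds t := Icc_mem_nhds ht.1 ht.2
      have hdiff : DifferentiableAt ℝ g t :=
        (hg.differentiableOn one_ne_zero t (Set.Ioo_subset_Icc_self ht)).differentiableAt hmem
      have hdg : HasDerivAt g (derivWithin g s t) t := by
        rw [derivWithin_of_mem_nhds hmem]
        exact hdiff.hasDerivAt
      have hu : HasDerivAt (fun t => Real.exp (-(g t)))
          (Real.exp (-(g t)) * -(derivWithin g s t)) t := hdg.neg.exp
      have : HasDerivAt (fun t => Real.exp (-(g t))) (φ t) t := by
        convert hu using 1
        simp only [hφ_def]; ring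
      exact this.hasDerivWithinAt
    have := intervalIntegral.integral_eq_sub_of_hasDeriv_right_of_le hT.le hcontu hderiv hint1
    rw [this, hg0, hgT]
    simp
  -- nonnegativity of ∫ (φ - c)^2
  set c : ℝ := (Real.exp (-T') - 1) / T with hc_def
  have hnn : 0 ≤ ∫ t in (0:ℝ)..T, (φ t - c) ^ 2 :=
    intervalIntegral.integral_nonneg hT.le (fun t _ => sq_nonneg _)
  have hexpand : ∫ t in (0:ℝ)..T, (φ t - c) ^ 2
      = (∫ t in (0:ℝ)..T, φ t ^ 2) - 2 * c * (∫ t in (0:ℝ)..T, φ t) + c ^ 2 * T := by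
    have heq : (fun t => (φ t - c) ^ 2)
        = fun t => (φ t ^ 2 - 2 * c * φ t) + c ^ 2 := by
      funext t; ring
    rw [heq, intervalIntegral.integral_add ((hint2).sub (hint1.const_mul (2 * c)))
        intervalIntegrable_const,
      intervalIntegral.integral_sub hint2 (hint1.const_mul (2 * c)),
      intervalIntegral.integral_const_mul, intervalIntegral.integral_const]
    simp
    ring
  -- schedF T g = ∫ φ^2
  have key2 : schedF T g = ∫ t in (0:ℝ)..T, φ t ^ 2 := by
    unfold schedF
    congr 1
    funext t
    have hexp : Real.exp (-2 * g t) = Real.exp (-(g t)) ^ 2 := by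
      rw [sq, ← Real.exp_add]; ring_nf
    rw [hexp]
    simp only [hφ_def]
    ring
  -- put it together
  rw [key1, key2]
  have hca : c = -(a / T) := by
    simp only [hc_def, ha_def]; field_simp; ring
  have hφint : (∫ t in (0:ℝ)..T, φ t) = c * T := by
    rw [hFTC, hc_def]; field_simp
  rw [hφint] at hexpand
  have hfinal : a ^ 2 / T = c ^ 2 * T := by
    rw [hca]; field_simp
  nlinarith [hnn, hexpand]
end

section
/- For every continuously differentiable function g : [0,T] → ℝ with g(0) = 0 and g(T) = T', one has F(g) ≥ (1 − exp(−T'))²/T. -/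
open Set MeasureTheory

/-- For every continuously differentiable `g : [0,T] → ℝ` with `g(0) = 0` and
`g(T) = T'`, one has `F(g) ≥ (1 − exp(−T'))²/T`. -/
theorem stmt_1 (T T' : ℝ) (hT : 0 < T) (hT' : 0 < T')
    (g : ℝ → ℝ)
    (hg : ContDiffOn ℝ 1 g (Set.Icc 0 T))
    (hg0 : g 0 = 0) (hgT : g T = T') :
    (1 - Real.exp (-T')) ^ 2 / T ≤ schedF T g := by
  set f : ℝ → ℝ := fun t => derivWithin g (Set.Icc 0 T) t * Real.exp (-(g t)) with hf_def
  have hTle : (0:ℝ) ≤ T := hT.le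
  have huIcc : Set.uIcc (0:ℝ) T = Set.Icc 0 T := Set.uIcc_of_le hTle
  have hud : UniqueDiffOn ℝ (Set.Icc (0:ℝ) T) := uniqueDiffOn_Icc hT
  have hg' : ContinuousOn (fun t => derivWithin g (Set.Icc 0 T) t) (Set.Icc 0 T) := by
    exact hg.continuousOn_derivWithin hud le_rfl
  have hgc : ContinuousOn g (Set.Icc 0 T) := hg.continuousOn
  have hfc : ContinuousOn f (Set.Icc 0 T) :=
    hg'.mul ((Real.continuous_exp.comp continuous_neg).comp_continuousOn hgc)
  have hfint : IntervalIntegrable f volume 0 T :=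
    (hfc.mono (by rw [huIcc])).intervalIntegrable
  have habs : IntervalIntegrable (fun t => |f t|) volume 0 T := hfint.abs
  have hsq : IntervalIntegrable (fun t => f t ^ 2) volume 0 T := by
    exact ((hfc.pow 2).mono (by rw [huIcc])).intervalIntegrable
  -- FTC: ∫ f = 1 - exp(-T')
  have hFTC : ∫ t in (0:ℝ)..T, f t = 1 - Real.exp (-T') := by
    have h1 : ∀ x ∈ Set.Ioo (0:ℝ) T, HasDerivWithinAt (fun t => -Real.exp (-(g t)))
        (f x) (Set.Ioi x) x := by
      intro x hx
      have hxI : x ∈ Set.Icc (0:ℝ) T := Set.mem_Icc_of_Ioo hx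
      have hd : HasDerivAt g (derivWithin g (Set.Icc 0 T) x) x := by
        have := (hg.differentiableOn one_ne_zero x hxI).hasDerivWithinAt
        exact this.hasDerivAt (Icc_mem_nhds hx.1 hx.2)
      have : HasDerivAt (fun t => -Real.exp (-(g t))) (f x) x := by
        have h2 : HasDerivAt (fun t => Real.exp (-(g t)))
            (Real.exp (-(g x)) * (-(derivWithin g (Set.Icc 0 T) x))) x :=
          (Real.hasDerivAt_exp _).comp x hd.neg
        have : HasDerivAt (fun t => -Real.exp (-(g t))) _ x := h2.neg
        convert this using 1
        show f x = _
        rw [hf_def]; ring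
      exact this.hasDerivWithinAt
    have hcont : ContinuousOn (fun t => -Real.exp (-(g t))) (Set.Icc 0 T) :=
      (((Real.continuous_exp.comp continuous_neg).comp_continuousOn hgc)).neg
    have := intervalIntegral.integral_eq_sub_of_hasDeriv_right_of_le hTle hcont h1 hfint
    rw [this, hg0, hgT]
    simp
    ring
  -- schedF equals ∫ f²
  have hF : schedF T g = ∫ t in (0:ℝ)..T, f t ^ 2 := by
    unfold schedF
    apply intervalIntegral.integral_congr
    intro t _
    simp only [hf_def]
    rw [mul_pow, ← Real.exp_nat_mul]
    ring_nf
  -- Cauchy–Schwarz: (∫ |f|)² ≤ T * ∫ f²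
  set I : ℝ := ∫ t in (0:ℝ)..T, |f t| with hI_def
  have hCS : I ^ 2 ≤ T * ∫ t in (0:ℝ)..T, f t ^ 2 := by
    set c : ℝ := I / T with hc_def
    have hnonneg : 0 ≤ ∫ t in (0:ℝ)..T, (|f t| - c) ^ 2 := by
      apply intervalIntegral.integral_nonneg hTle
      intro u _; positivity
    have hexp : ∫ t in (0:ℝ)..T, (|f t| - c) ^ 2
        = (∫ t in (0:ℝ)..T, f t ^ 2) - 2 * c * I + c ^ 2 * T := by
      have heq : ∀ t, (|f t| - c) ^ 2 = f t ^ 2 - (2 * c) * |f t| + c ^ 2 := by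
        intro t; rw [sub_sq]; rw [sq_abs]; ring
      calc ∫ t in (0:ℝ)..T, (|f t| - c) ^ 2
          = ∫ t in (0:ℝ)..T, (f t ^ 2 - (2 * c) * |f t| + c ^ 2) := by
            exact intervalIntegral.integral_congr fun t _ => heq t
        _ = (∫ t in (0:ℝ)..T, (f t ^ 2 - (2 * c) * |f t|)) + ∫ t in (0:ℝ)..T, (c ^ 2 : ℝ) := by
            exact intervalIntegral.integral_add (hsq.sub (habs.const_mul _))
              intervalIntegrable_const
        _ = (∫ t in (0:ℝ)..T, f t ^ 2) - (2 * c) * I + c ^ 2 * T := by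
            rw [intervalIntegral.integral_sub hsq (habs.const_mul _),
              intervalIntegral.integral_const_mul, intervalIntegral.integral_const]
            simp [hI_def]; ring
    rw [hexp] at hnonneg
    have hc : c = I / T := rfl
    have : 0 ≤ (∫ t in (0:ℝ)..T, f t ^ 2) - I ^ 2 / T := by
      have hT0 : T ≠ 0 := ne_of_gt hT
      calc (0:ℝ) ≤ _ := hnonneg
        _ = (∫ t in (0:ℝ)..T, f t ^ 2) - I ^ 2 / T := by
          rw [hc]; field_simp; ring
    have := (div_le_iff₀ hT).mp (by linarith : I ^ 2 / T ≤ ∫ t in (0:ℝ)..T, f t ^ 2)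
    linarith [this]
  -- |∫ f| ≤ ∫ |f|
  have habs_le : |∫ t in (0:ℝ)..T, f t| ≤ I :=
    intervalIntegral.abs_integral_le_integral_abs hTle
  have h1 : (1 - Real.exp (-T')) ^ 2 ≤ I ^ 2 := by
    rw [← hFTC]
    have h0 : 0 ≤ I := le_trans (abs_nonneg _) habs_le
    calc (∫ t in (0:ℝ)..T, f t) ^ 2 = |∫ t in (0:ℝ)..T, f t| ^ 2 := (sq_abs _).symm
      _ ≤ I ^ 2 := by apply pow_le_pow_left₀ (abs_nonneg _) habs_le
  rw [hF, div_le_iff₀ hT]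
  calc (1 - Real.exp (-T')) ^ 2 ≤ I ^ 2 := h1
    _ ≤ T * ∫ t in (0:ℝ)..T, f t ^ 2 := hCS
    _ = (∫ t in (0:ℝ)..T, f t ^ 2) * T := mul_comm _ _
end

section
/- The scheduler g* satisfies g*(0) = 0, g*(T) = T', and F(g*) = (1 − exp(−T'))²/T. -/
open Set MeasureTheory

/-- The scheduler `g*` satisfies `g*(0) = 0`, `g*(T) = T'`, and
`F(g*) = (1 − exp(−T'))²/T`. -/
theorem stmt_2 (T T' : ℝ) (hT : 0 < T) (hT' : 0 < T')
    (gstar : ℝ → ℝ)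
    (hgstar : ∀ t, gstar t = -Real.log (1 - t * (1 - Real.exp (-T')) / T)) :
    gstar 0 = 0 ∧ gstar T = T' ∧ schedF T gstar = (1 - Real.exp (-T')) ^ 2 / T := by
  set c : ℝ := 1 - Real.exp (-T') with hcdef
  have hexp : Real.exp (-T') < 1 := Real.exp_lt_one_iff.mpr (by linarith)
  have hcpos : 0 < c := by simp [hcdef]; linarith
  have hc1 : c < 1 := by
    have := Real.exp_pos (-T'); simp [hcdef]; linarith
  have hu : ∀ t ∈ Icc (0:ℝ) T, 0 < 1 - t * c / T := by
    intro t ht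
    have h1 : t * c / T ≤ c := by
      rw [div_le_iff₀ hT]
      nlinarith [ht.2, hcpos.le]
    linarith
  have hgT : gstar T = T' := by
    rw [hgstar]
    have : 1 - T * c / T = Real.exp (-T') := by field_simp [hcdef]; linarith
    rw [this, Real.log_exp]; ring
  refine ⟨by rw [hgstar]; simp, hgT, ?_⟩
  have hu2 : ∀ t ∈ Icc (0:ℝ) T, (0:ℝ) < T - t * c := by
    intro t ht
    nlinarith [ht.1, ht.2, hcpos, hc1]
  have hd : ∀ t ∈ Icc (0:ℝ) T,
      HasDerivWithinAt gstar (c / T / (1 - t * c / T)) (Icc 0 T) t := by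
    intro t ht
    have hg : gstar = fun t => -Real.log (1 - t * c / T) := funext hgstar
    rw [hg]
    have h1 : HasDerivWithinAt (fun t : ℝ => 1 - t * c / T) (-(c / T)) (Icc 0 T) t := by
      have := (((hasDerivAt_id t).mul_const c).div_const T).const_sub 1
      simpa using this.hasDerivWithinAt
    have h2 := (h1.log (ne_of_gt (hu t ht))).neg
    refine h2.congr_deriv ?_
    rw [neg_div, neg_neg]
  have hkey : schedF T gstar = ∫ t in (0:ℝ)..T, (c / T) ^ 2 := by
    unfold schedF
    apply intervalIntegral.integral_congr
    intro t ht
    rw [uIcc_of_le hT.le] at ht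
    have hderiv : derivWithin gstar (Icc 0 T) t = c / T / (1 - t * c / T) :=
      (hd t ht).derivWithin (uniqueDiffOn_Icc hT t ht)
    have hupos := hu t ht
    simp only [hderiv, hgstar]
    have hexp2 : Real.exp (-2 * -Real.log (1 - t * c / T)) = (1 - t * c / T) ^ 2 := by
      rw [show (-2 : ℝ) * -Real.log (1 - t * c / T)
          = Real.log (1 - t * c / T) + Real.log (1 - t * c / T) by ring,
        Real.exp_add, Real.exp_log hupos]
      ring
    simp only [hexp2]
    rw [div_pow, div_mul_cancel₀ _ (pow_ne_zero 2 hupos.ne')]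
  rw [hkey, intervalIntegral.integral_const]
  simp only [sub_zero, smul_eq_mul]
  field_simp
end

section
/- If g : [0,T] → ℝ is twice differentiable with g''(t) = (g'(t))² for all t ∈ [0,T], and g(0) = 0, g(T) = T', then g(t) = g*(t) for all t ∈ [0,T]. In particular, g* itself satisfies the Euler–Lagrange equation g*''(t) = (g*'(t))² on [0,T]. -/
open Set

/-- If `g : [0,T] → ℝ` is twice differentiable with `g''(t) = (g'(t))²` on `[0,T]`,
`g(0) = 0` and `g(T) = T'`, then `g = g*` on `[0,T]`. In particular, `g*` itself
satisfies the Euler–Lagrange equation `g*''(t) = (g*'(t))²` on `[0,T]`. -/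
theorem stmt_4 (T T' : ℝ) (hT : 0 < T) (hT' : 0 < T')
    (gstar : ℝ → ℝ)
    (hgstar : ∀ t, gstar t = -Real.log (1 - t * (1 - Real.exp (-T')) / T))
    (g g' g'' : ℝ → ℝ)
    (hg1 : ∀ t ∈ Set.Icc 0 T, HasDerivWithinAt g (g' t) (Set.Icc 0 T) t)
    (hg2 : ∀ t ∈ Set.Icc 0 T, HasDerivWithinAt g' (g'' t) (Set.Icc 0 T) t)
    (hode : ∀ t ∈ Set.Icc 0 T, g'' t = (g' t) ^ 2)
    (hg0 : g 0 = 0) (hgT : g T = T') :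
    (∀ t ∈ Set.Icc 0 T, g t = gstar t) ∧
    (∀ t ∈ Set.Icc 0 T, deriv (deriv gstar) t = (deriv gstar t) ^ 2) := by
  have hsub : ∀ x ∈ Set.Ico (0:ℝ) T, Set.Icc (0:ℝ) T ∈ nhdsWithin x (Set.Ici x) :=
    fun x hx => Icc_mem_nhdsGE_of_mem hx
  set c : ℝ := g' 0 * Real.exp (-(g 0)) with hc
  -- step 1: g' t * exp(-g t) is constant
  have key : ∀ t ∈ Set.Icc (0:ℝ) T, g' t * Real.exp (-(g t)) = c := by
    intro t ht
    have hcont : ContinuousOn (fun t => g' t * Real.exp (-(g t))) (Set.Icc 0 T) :=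
      fun x hx => (((hg2 x hx).mul (((hg1 x hx).neg).exp)).continuousWithinAt)
    have hderiv : ∀ x ∈ Set.Ico (0:ℝ) T,
        HasDerivWithinAt (fun t => g' t * Real.exp (-(g t))) 0 (Set.Ici x) x := by
      intro x hx
      have hx' : x ∈ Set.Icc (0:ℝ) T := ⟨hx.1, hx.2.le⟩
      have h := (hg2 x hx').mul (((hg1 x hx').neg).exp)
      have h0 : g'' x * Real.exp (-(g x)) + g' x * (Real.exp (-(g x)) * -(g' x)) = 0 := by
        rw [hode x hx']; ring
      exact (h0 ▸ h).mono_of_mem_nhdsWithin (hsub x hx)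
    exact constant_of_has_deriv_right_zero hcont hderiv t ht
  -- step 2: exp(-g t) = 1 - c * t
  have key2 : ∀ t ∈ Set.Icc (0:ℝ) T, Real.exp (-(g t)) = 1 - c * t := by
    intro t ht
    have hcont : ContinuousOn (fun t => Real.exp (-(g t)) + c * t) (Set.Icc 0 T) :=
      fun x hx => ((((hg1 x hx).neg).exp).add
        ((hasDerivWithinAt_id x _).const_mul c)).continuousWithinAt
    have hderiv : ∀ x ∈ Set.Ico (0:ℝ) T,
        HasDerivWithinAt (fun t => Real.exp (-(g t)) + c * t) 0 (Set.Ici x) x := by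
      intro x hx
      have hx' : x ∈ Set.Icc (0:ℝ) T := ⟨hx.1, hx.2.le⟩
      have h := (((hg1 x hx').neg).exp).add ((hasDerivWithinAt_id x (Set.Icc 0 T)).const_mul c)
      have h0 : Real.exp (-(g x)) * -(g' x) + c * 1 = 0 := by
        have := key x hx'
        nlinarith [this]
      exact (h0 ▸ h).mono_of_mem_nhdsWithin (hsub x hx)
    have h := constant_of_has_deriv_right_zero hcont hderiv t ht
    simp only [hg0, neg_zero, Real.exp_zero, mul_zero, add_zero] at h
    linarith [h]
  -- value of c
  have hcT : c * T = 1 - Real.exp (-T') := by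
    have := key2 T ⟨hT.le, le_refl T⟩
    rw [hgT] at this
    linarith
  have hTne : T ≠ 0 := ne_of_gt hT
  -- gstar rewritten with c
  have hgc : ∀ t : ℝ, gstar t = -Real.log (1 - c * t) := by
    intro t
    have harg : t * (1 - Real.exp (-T')) / T = c * t := by
      rw [← hcT]; field_simp
    rw [hgstar t, harg]
  constructor
  · intro t ht
    have h2 := key2 t ht
    have : -(g t) = Real.log (1 - c * t) := by
      rw [← h2, Real.log_exp]
    rw [hgc t, ← this, neg_neg]
  · -- second part
    have hcpos : 0 < c := by
      have : Real.exp (-T') < 1 := Real.exp_lt_one_iff.mpr (by linarith)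
      have hnum : 0 < 1 - Real.exp (-T') := by linarith
      have : c = (1 - Real.exp (-T')) / T := by rw [← hcT]; field_simp
      rw [this]; positivity
    intro t ht
    have hpos : ∀ s ∈ {s : ℝ | c * s < 1}, 0 < 1 - c * s := fun s hs => by
      simp only [Set.mem_setOf_eq] at hs; linarith
    have hopen : IsOpen {s : ℝ | c * s < 1} :=
      isOpen_lt (continuous_const.mul continuous_id) continuous_const
    have htO : t ∈ {s : ℝ | c * s < 1} := by
      simp only [Set.mem_setOf_eq]
      have h1 : c * t ≤ c * T := by
        apply mul_le_mul_of_nonneg_left ht.2 hcpos.le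
      have : Real.exp (-T') < 1 := Real.exp_lt_one_iff.mpr (by linarith)
      have h2 : Real.exp (-T') > 0 := Real.exp_pos _
      rw [hcT] at h1
      linarith
    -- derivative of gstar on the open set
    have hd1 : ∀ s ∈ {s : ℝ | c * s < 1}, HasDerivAt gstar (c / (1 - c * s)) s := by
      intro s hs
      have hne : (1 : ℝ) - c * s ≠ 0 := ne_of_gt (hpos s hs)
      have hu : HasDerivAt (fun s : ℝ => 1 - c * s) (-c) s := by
        simpa using (((hasDerivAt_id s).const_mul c).const_sub 1)
      have := (hu.log hne).neg
      have heq : (fun s : ℝ => -Real.log (1 - c * s)) = gstar := by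
        funext s; rw [hgc s]
      rw [show (-fun y : ℝ => Real.log (1 - c * y)) = gstar from heq] at this
      rw [neg_div, neg_neg] at this
      exact this
    have hderiv_eq : Set.EqOn (deriv gstar) (fun s => c / (1 - c * s)) {s : ℝ | c * s < 1} :=
      fun s hs => (hd1 s hs).deriv
    have hev : deriv gstar =ᶠ[nhds t] (fun s => c / (1 - c * s)) :=
      Filter.eventuallyEq_of_mem (hopen.mem_nhds htO) hderiv_eq
    have hne : (1 : ℝ) - c * t ≠ 0 := ne_of_gt (hpos t htO)
    have hu : HasDerivAt (fun s : ℝ => 1 - c * s) (-c) t := by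
      simpa using (((hasDerivAt_id t).const_mul c).const_sub 1)
    have hF : HasDerivAt (fun s => c / (1 - c * s))
        ((0 * (1 - c * t) - c * (-c)) / (1 - c * t) ^ 2) t :=
      (hasDerivAt_const t c).div hu hne
    rw [hev.deriv_eq, hF.deriv, hderiv_eq htO]
    field_simp
    ring
end

section
/- The function ρ satisfies the Fokker–Planck equation of the scheduled Ornstein–Uhlenbeck process: for all t ≥ 0 and x ∈ ℝ, ∂_t ρ(t,x) = g'(t)·( ∂_x( x·ρ(t,x) ) + (1/2)·∂²_{xx} ρ(t,x) ). Moreover, if g(0) = 0 then ρ(0,·) is the density of the Gaussian distribution N(μ, σ²). -/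
open Set MeasureTheory

/-- The Gaussian marginal density `ρ(t,x)` of the scheduled Ornstein–Uhlenbeck process
started at `N(μ, σ²)` satisfies the Fokker–Planck equation
`∂_t ρ = g'(t)·( ∂_x( x·ρ ) + (1/2)·∂²_{xx} ρ )` for all `t ≥ 0`, `x ∈ ℝ`; moreover,
if `g(0) = 0` then `ρ(0,·)` is the density of the Gaussian distribution `N(μ, σ²)`. -/
theorem stmt_7 (μ σ : ℝ) (hσ : 0 < σ) (g : ℝ → ℝ)
    (hg_diff : ∀ t ∈ Set.Ici (0:ℝ), DifferentiableWithinAt ℝ g (Set.Ici 0) t)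
    (hg_nonneg : ∀ t ∈ Set.Ici (0:ℝ), 0 ≤ g t)
    (M V : ℝ → ℝ) (ρ : ℝ → ℝ → ℝ)
    (hM : ∀ t, M t = Real.exp (-(g t)) * μ)
    (hV : ∀ t, V t = 1 / 2 + Real.exp (-2 * g t) * (σ ^ 2 - 1 / 2))
    (hρ : ∀ t x, ρ t x =
      (Real.sqrt (2 * Real.pi * V t))⁻¹ * Real.exp (-((x - M t) ^ 2) / (2 * V t))) :
    (∀ t ∈ Set.Ici (0:ℝ), ∀ x : ℝ,
      derivWithin (fun s => ρ s x) (Set.Ici 0) t =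
        derivWithin g (Set.Ici 0) t *
          (deriv (fun y => y * ρ t y) x + (1 / 2) * deriv (deriv (fun y => ρ t y)) x)) ∧
    (g 0 = 0 → ∀ x : ℝ,
      ρ 0 x = ProbabilityTheory.gaussianPDFReal μ (Real.toNNReal (σ ^ 2)) x) := by
  have hπ : (0:ℝ) < Real.pi := Real.pi_pos
  constructor
  · intro t ht x
    have ht0 : (0:ℝ) ≤ t := ht
    have hgt0 : (0:ℝ) ≤ g t := hg_nonneg t ht
    set A := V t with hAdef
    set m := M t with hmdef
    have hVa : (1/2 + Real.exp (-2 * g t) * (σ^2 - 1/2) : ℝ) = A := (hV t).symm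
    have hMa : Real.exp (-(g t)) * μ = m := (hM t).symm
    have hApos : 0 < A := by
      rw [← hVa]
      have h1 : Real.exp (-2 * g t) ≤ 1 := by
        rw [← Real.exp_zero]; exact Real.exp_le_exp.mpr (by linarith)
      have h2 : 0 < Real.exp (-2 * g t) := Real.exp_pos _
      rcases le_or_gt (1/2 : ℝ) (σ^2) with h | h
      · nlinarith
      · nlinarith [mul_pos hσ hσ, sq_nonneg σ]
    set s := Real.sqrt (2 * Real.pi * A) with hsdef
    have hs2 : s^2 = 2 * Real.pi * A := Real.sq_sqrt (by positivity)
    have hs0 : 0 < s := Real.sqrt_pos.mpr (by positivity)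
    set e := Real.exp (-(x - m)^2 / (2*A)) with hedef
    have hρx : ρ t x = s⁻¹ * e := by
      rw [hρ t x, ← hAdef, ← hmdef, hsdef, hedef]
    -- spatial derivatives
    have hfun : (fun y => ρ t y)
        = (fun y => (Real.sqrt (2 * Real.pi * A))⁻¹ * Real.exp (-((y - m)^2) / (2*A))) := by
      funext y; rw [hρ t y, ← hAdef, ← hmdef]
    have hderiv1 : ∀ y, HasDerivAt (fun y => ρ t y) (ρ t y * (-(y - m) / A)) y := by
      intro y
      rw [hfun]
      have h2 := ((((hasDerivAt_id y).sub_const m).pow 2).neg.div_const (2*A)).exp.const_mul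
        ((Real.sqrt (2 * Real.pi * A))⁻¹)
      convert h2 using 1
      · rfl
      · rfl
      · rfl
      rw [hρ t y, ← hAdef, ← hmdef]
      simp only [Pi.neg_apply, Pi.pow_apply, id_eq]
      field_simp
      ring
    have hd1fun : deriv (fun y => ρ t y) = fun y => ρ t y * (-(y - m) / A) :=
      funext fun y => (hderiv1 y).deriv
    have hderiv2 : HasDerivAt (fun y => ρ t y * (-(y - m) / A))
        (ρ t x * (-(x - m) / A) * (-(x - m) / A) + ρ t x * (-1 / A)) x := by
      have h3 : HasDerivAt (fun y : ℝ => -(y - m) / A) (-1 / A) x := by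
        have := (((hasDerivAt_id x).sub_const m).neg).div_const A
        simpa using this
      exact (hderiv1 x).mul h3
    have hd2 : deriv (deriv (fun y => ρ t y)) x
        = ρ t x * (-(x - m) / A) * (-(x - m) / A) + ρ t x * (-1 / A) := by
      rw [hd1fun]; exact hderiv2.deriv
    have hdx : deriv (fun y => y * ρ t y) x = 1 * ρ t x + x * (ρ t x * (-(x - m) / A)) :=
      ((hasDerivAt_id x).mul (hderiv1 x)).deriv
    -- time derivative
    set C' : ℝ := -(2 * Real.pi * (1 - 2*A) / (2*s)) / s^2 with hC'def
    set G' : ℝ := ((-(2*(x - m)*m)) * (2*A) - (-((x - m)^2)) * (2*(1 - 2*A))) / (2*A)^2 with hG'def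
    set Fd : ℝ := C' * e + s⁻¹ * (e * G') with hFddef
    have hVd : HasDerivAt (fun a : ℝ => 1/2 + Real.exp (-2*a) * (σ^2 - 1/2)) (1 - 2*A) (g t) := by
      have h := ((((hasDerivAt_id (g t)).const_mul (-2:ℝ)).exp).mul_const (σ^2 - 1/2)).const_add (1/2 : ℝ)
      convert h using 1
      · rfl
      · rfl
      · rfl
      have h2 : Real.exp (-2 * g t) * (σ^2 - 1/2) = A - 1/2 := by rw [← hVa]; ring
      simp only [id_eq]
      linear_combination (2 : ℝ) * h2
    have hMd : HasDerivAt (fun a : ℝ => Real.exp (-a) * μ) (-m) (g t) := by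
      have h := (((hasDerivAt_id (g t)).neg).exp).mul_const μ
      convert h using 1
      · rfl
      · rfl
      · rfl
      simp only [Pi.neg_apply, id_eq]
      rw [← hMa]; ring
    have hVane : (2 * Real.pi * (1/2 + Real.exp (-2 * g t) * (σ^2 - 1/2)) : ℝ) ≠ 0 := by
      rw [hVa]; positivity
    have hsq : HasDerivAt (fun a : ℝ => Real.sqrt (2 * Real.pi * (1/2 + Real.exp (-2*a) * (σ^2 - 1/2))))
        (2 * Real.pi * (1 - 2*A) / (2*s)) (g t) := by
      have h := (hVd.const_mul (2 * Real.pi)).sqrt hVane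
      convert h using 2
      rw [hVa, hsdef]
    have hsne : Real.sqrt (2 * Real.pi * (1/2 + Real.exp (-2 * g t) * (σ^2 - 1/2))) ≠ 0 := by
      rw [hVa, ← hsdef]; exact ne_of_gt hs0
    have hCinv : HasDerivAt (fun a : ℝ => (Real.sqrt (2 * Real.pi * (1/2 + Real.exp (-2*a) * (σ^2 - 1/2))))⁻¹)
        C' (g t) := by
      have h := hsq.inv hsne
      convert h using 2
      · rfl
      · rfl
      · rfl
      rw [hVa, ← hsdef]
    have hnum : HasDerivAt (fun a : ℝ => -((x - Real.exp (-a) * μ)^2)) (-(2*(x - m)*m)) (g t) := by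
      have h := (((hasDerivAt_const (g t) x).sub hMd).pow 2).neg
      convert h using 1
      · rfl
      · rfl
      · rfl
      simp only [Pi.sub_apply]
      rw [hMa]; ring
    have hden : HasDerivAt (fun a : ℝ => 2 * (1/2 + Real.exp (-2*a) * (σ^2 - 1/2))) (2*(1 - 2*A)) (g t) :=
      hVd.const_mul 2
    have hdenne : (2 * (1/2 + Real.exp (-2 * g t) * (σ^2 - 1/2)) : ℝ) ≠ 0 := by
      rw [hVa]; positivity
    have hG : HasDerivAt (fun a : ℝ => -((x - Real.exp (-a) * μ)^2) / (2 * (1/2 + Real.exp (-2*a) * (σ^2 - 1/2))))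
        G' (g t) := by
      have h := hnum.div hden hdenne
      convert h using 1
      · rfl
      · rfl
      · rfl
      rw [hG'def, hVa, hMa]
    have hE : HasDerivAt (fun a : ℝ => Real.exp (-((x - Real.exp (-a) * μ)^2) / (2 * (1/2 + Real.exp (-2*a) * (σ^2 - 1/2)))))
        (e * G') (g t) := by
      have h := hG.exp
      convert h using 2
      rw [hedef, hVa, hMa]
    have hF : HasDerivAt (fun a : ℝ => (Real.sqrt (2 * Real.pi * (1/2 + Real.exp (-2*a) * (σ^2 - 1/2))))⁻¹
        * Real.exp (-((x - Real.exp (-a) * μ)^2) / (2 * (1/2 + Real.exp (-2*a) * (σ^2 - 1/2)))))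
        Fd (g t) := by
      have h := hCinv.mul hE
      convert h using 1
      · rfl
      · rfl
      · rfl
      rw [hFddef, hedef, hVa, hMa, ← hsdef]
    have hcomp : (fun u => ρ u x) = (fun u => (Real.sqrt (2 * Real.pi * (1/2 + Real.exp (-2*(g u)) * (σ^2 - 1/2))))⁻¹
        * Real.exp (-((x - Real.exp (-(g u)) * μ)^2) / (2 * (1/2 + Real.exp (-2*(g u)) * (σ^2 - 1/2))))) := by
      funext u; rw [hρ u x, hM u, hV u]
    have hg' := (hg_diff t ht).hasDerivWithinAt
    have hcompd : HasDerivWithinAt (fun u => ρ u x) (Fd * derivWithin g (Set.Ici 0) t) (Set.Ici 0) t := by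
      rw [hcomp]
      exact hF.comp_hasDerivWithinAt t hg'
    have hLHS : derivWithin (fun u => ρ u x) (Set.Ici 0) t = Fd * derivWithin g (Set.Ici 0) t :=
      hcompd.derivWithin (uniqueDiffOn_Ici 0 t ht)
    rw [hLHS, hdx, hd2, hρx]
    have hpi : Real.pi = s^2 / (2*A) := by rw [hs2]; field_simp
    have key : Fd = 1 * (s⁻¹ * e) + x * (s⁻¹ * e * (-(x - m) / A))
        + 1/2 * (s⁻¹ * e * (-(x - m) / A) * (-(x - m) / A) + s⁻¹ * e * (-1 / A)) := by
      rw [hFddef, hC'def, hG'def, hpi]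
      field_simp
      ring
    rw [key]; ring
  · intro hg0 x
    rw [hρ 0 x, hM 0, hV 0, hg0]
    simp only [ProbabilityTheory.gaussianPDFReal, Real.coe_toNNReal _ (sq_nonneg σ)]
    norm_num
end

section
/- For all x, v ∈ ℝ^d, the second directional derivative of log p satisfies |D²(log p)(x)[v,v]| ≤ ( 1/s + (max_{i,j} ‖μ_i − μ_j‖²)/s² )·‖v‖². In particular, the Hessian of the log-density of any finite Gaussian mixture with common covariance s·I has operator norm bounded by 1/s + (max_{i,j} ‖μ_i − μ_j‖²)/s², uniformly in x and independently of the dimension d and the number N of components. -/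
open Set

private lemma psi_deriv (ci bi V s : ℝ) (hs : s ≠ 0) (t : ℝ) :
    HasDerivAt (fun t : ℝ => -(ci + 2*bi*t + V*t^2)/(2*s)) (-(bi + V*t)/s) t := by
  have h1 : HasDerivAt (fun t : ℝ => 2*bi*t) (2*bi) t := by
    simpa using (hasDerivAt_id t).const_mul (2*bi)
  have h2 : HasDerivAt (fun t : ℝ => V*t^2) (V*(2*t)) t := by
    simpa using (hasDerivAt_pow 2 t).const_mul V
  have h : HasDerivAt (fun t : ℝ => ci + 2*bi*t + V*t^2) (2*bi + V*(2*t)) t := by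
    exact (((hasDerivAt_const t ci).add h1).add h2).congr_deriv (by ring)
  have := (h.neg).div_const (2*s)
  refine this.congr_deriv ?_
  rw [div_eq_div_iff (mul_ne_zero two_ne_zero hs) hs]
  ring

set_option maxHeartbeats 1000000 in
/-- For the Gaussian-mixture function `p(x) = Σ_i w_i · exp(−‖x − μ_i‖²/(2s))` on `ℝ^d`
(with positive weights and common covariance `s·I`), the second directional derivative
of `log p` satisfies, for all `x, v ∈ ℝ^d`,
`|D²(log p)(x)[v,v]| ≤ (1/s + (max_{i,j} ‖μ_i − μ_j‖²)/s²)·‖v‖²`,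
uniformly in `x` and independently of the dimension `d` and the number `N` of
components. -/
theorem stmt_9 (d N : ℕ) (hd : 1 ≤ d) (hN : 1 ≤ N)
    (s : ℝ) (hs : 0 < s)
    (w : Fin N → ℝ) (hw : ∀ i, 0 < w i)
    (μ : Fin N → EuclideanSpace ℝ (Fin d))
    (p : EuclideanSpace ℝ (Fin d) → ℝ)
    (hp : ∀ x, p x = ∑ i, w i * Real.exp (-‖x - μ i‖ ^ 2 / (2 * s)))
    (D2 : ℝ) (hD2 : IsGreatest {r : ℝ | ∃ i j, r = ‖μ i - μ j‖ ^ 2} D2) :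
    ∀ x v : EuclideanSpace ℝ (Fin d),
      |iteratedFDeriv ℝ 2 (fun y => Real.log (p y)) x ![v, v]|
        ≤ (1 / s + D2 / s ^ 2) * ‖v‖ ^ 2 := by
  have hpe : p = fun y => ∑ i, w i * Real.exp (-‖y - μ i‖ ^ 2 / (2 * s)) := funext hp
  subst hpe
  set P : EuclideanSpace ℝ (Fin d) → ℝ := fun y => ∑ i, w i * Real.exp (-‖y - μ i‖ ^ 2 / (2 * s)) with hPdef
  have hNe : Nonempty (Fin N) := ⟨⟨0, hN⟩⟩
  have hPpos : ∀ y, 0 < P y := fun y =>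
    Finset.sum_pos (fun i _ => mul_pos (hw i) (Real.exp_pos _)) Finset.univ_nonempty
  have hPc : ContDiff ℝ ⊤ P := by
    apply ContDiff.sum
    intro i _
    exact contDiff_const.mul
      ((((contDiff_id.sub contDiff_const).norm_sq (𝕜 := ℝ)).neg.div_const _).exp)
  set f : EuclideanSpace ℝ (Fin d) → ℝ := fun y => Real.log (P y) with hfdef
  have hfC : ContDiff ℝ ⊤ f := hPc.log fun y => (hPpos y).ne'
  have hfd : Differentiable ℝ f := hfC.differentiable (by simp)
  intro x v
  -- line setup
  set L : ℝ → EuclideanSpace ℝ (Fin d) := fun t => x + t • v with hLdef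
  have hLd : ∀ t : ℝ, HasDerivAt L v t := by
    intro t
    have : HasDerivAt (fun t : ℝ => t • v) ((1:ℝ) • v) t := (hasDerivAt_id t).smul_const v
    exact (this.const_add x).congr_deriv (one_smul _ _)
  have hL0 : L 0 = x := by simp [hLdef]
  -- scalar data
  set c : Fin N → ℝ := fun i => ‖x - μ i‖ ^ 2 with hcdef
  set b : Fin N → ℝ := fun i => (inner ℝ (x - μ i) v : ℝ) with hbdef
  set V : ℝ := ‖v‖ ^ 2 with hVdef
  set q : ℝ → ℝ := fun t => ∑ i, w i * Real.exp (-(c i + 2*b i*t + V*t^2) / (2*s)) with hqdef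
  set q1 : ℝ → ℝ :=
    fun t => ∑ i, w i * Real.exp (-(c i + 2*b i*t + V*t^2) / (2*s)) * (-(b i + V*t)/s)
    with hq1def
  have hnorm : ∀ (i : Fin N) (t : ℝ), ‖L t - μ i‖ ^ 2 = c i + 2*b i*t + V*t^2 := by
    intro i t
    have : L t - μ i = (x - μ i) + t • v := by
      simp [hLdef]; abel
    rw [this, norm_add_sq_real, real_inner_smul_right, norm_smul]
    simp only [hcdef, hbdef, hVdef, Real.norm_eq_abs, mul_pow, sq_abs]
    ring
  have hq : ∀ t, P (L t) = q t := by
    intro t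
    simp only [hPdef, hqdef]
    refine Finset.sum_congr rfl fun i _ => ?_
    rw [hnorm i t]
  have hqpos : ∀ t, 0 < q t := fun t => (hq t) ▸ hPpos (L t)
  have hq' : ∀ t, HasDerivAt q (q1 t) t := by
    intro t
    apply HasDerivAt.fun_sum
    intro i _
    have := ((psi_deriv (c i) (b i) V s hs.ne' t).exp).const_mul (w i)
    refine this.congr_deriv ?_
    ring
  -- second derivative data
  set g : Fin N → ℝ := fun i => w i * Real.exp (-(c i)/(2*s)) with hgdef
  set a : Fin N → ℝ := fun i => -(b i)/s with hadef
  set Q : ℝ := ∑ i, g i with hQdef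
  set M1 : ℝ := ∑ i, g i * a i with hM1def
  set M2 : ℝ := ∑ i, g i * a i ^ 2 with hM2def
  have hgpos : ∀ i, 0 < g i := fun i => mul_pos (hw i) (Real.exp_pos _)
  have hq0 : q 0 = Q := by
    simp only [hqdef, hQdef, hgdef]
    refine Finset.sum_congr rfl fun i _ => ?_
    norm_num
  have hq10 : q1 0 = M1 := by
    simp only [hq1def, hM1def, hgdef, hadef]
    refine Finset.sum_congr rfl fun i _ => ?_
    norm_num
  set q2v : ℝ := ∑ i, g i * (a i ^ 2 - V/s) with hq2vdef
  have hq1' : HasDerivAt q1 q2v 0 := by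
    apply HasDerivAt.fun_sum
    intro i _
    have hexp := ((psi_deriv (c i) (b i) V s hs.ne' 0).exp).const_mul (w i)
    have hlin : HasDerivAt (fun t : ℝ => -(b i + V*t)/s) (-V/s) 0 := by
      have h1 : HasDerivAt (fun t : ℝ => b i + V*t) V 0 := by
        exact ((hasDerivAt_const (0:ℝ) (b i)).add ((hasDerivAt_id (0:ℝ)).const_mul V)).congr_deriv (by ring)
      simpa using (h1.neg).div_const s
    have := hexp.mul hlin
    refine this.congr_deriv ?_
    simp only [hgdef, hadef]
    norm_num
    ring
  -- the key identification
  have hkey : ∀ t, fderiv ℝ f (L t) v = q1 t / q t := by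
    intro t
    have h1 : HasDerivAt (fun τ => f (L τ)) (fderiv ℝ f (L t) v) t :=
      (hfd (L t)).hasFDerivAt.comp_hasDerivAt t (hLd t)
    have h2 : HasDerivAt (fun τ => f (L τ)) (q1 t / q t) t := by
      have he : (fun τ => f (L τ)) = fun τ => Real.log (q τ) := by
        funext τ; rw [hfdef]; simp only []; rw [hq τ]
      rw [he]
      exact ((hq' t).log (hqpos t).ne')
    exact h1.unique h2
  set h : EuclideanSpace ℝ (Fin d) → ℝ := fun y => fderiv ℝ f y v with hhdef
  have hfC1 : ContDiff ℝ 1 (fderiv ℝ f) := hfC.fderiv_right le_top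
  have hh : Differentiable ℝ h :=
    (hfC1.differentiable one_ne_zero).clm_apply (differentiable_const v)
  set D : ℝ := (q2v * q 0 - q1 0 * q1 0) / q 0 ^ 2 with hDdef
  have hhL : HasDerivAt (fun t => h (L t)) D 0 := by
    have he : (fun t => h (L t)) = fun t => q1 t / q t := by
      funext t; exact hkey t
    rw [he]
    exact hq1'.div (hq' 0) (hqpos 0).ne'
  have hhL' : HasDerivAt (fun t => h (L t)) (fderiv ℝ h x v) 0 := by
    have := (hh (L 0)).hasFDerivAt.comp_hasDerivAt 0 (hLd 0)
    rwa [hL0] at this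
  have hDeq : fderiv ℝ h x v = D := hhL'.unique hhL
  -- relate to iterated derivative
  have happ : HasFDerivAt h
      ((ContinuousLinearMap.apply ℝ ℝ v).comp (fderiv ℝ (fderiv ℝ f) x)) x :=
    (ContinuousLinearMap.apply ℝ ℝ v).hasFDerivAt.comp x
      ((hfC1.differentiable one_ne_zero) x).hasFDerivAt
  have hiter : iteratedFDeriv ℝ 2 f x ![v, v] = D := by
    rw [iteratedFDeriv_two_apply]
    have : fderiv ℝ (fderiv ℝ f) x (![v,v] 0) (![v,v] 1) = fderiv ℝ h x v := by
      rw [happ.fderiv]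
      simp [ContinuousLinearMap.apply_apply]
    rw [this, hDeq]
  -- algebraic form of D
  have hQpos : 0 < Q := Finset.sum_pos (fun i _ => hgpos i) Finset.univ_nonempty
  have hDform : D = (M2 * Q - M1^2) / Q^2 - V/s := by
    have hsum : q2v = M2 - (V/s) * Q := by
      simp only [hq2vdef, hM2def, hQdef, mul_sub, Finset.sum_sub_distrib, Finset.mul_sum]
      congr 1
      refine Finset.sum_congr rfl fun i _ => ?_
      ring
    rw [hDdef, hq0, hq10, hsum]
    field_simp
    ring
  -- bounds
  have hVnn : (0:ℝ) ≤ V := by rw [hVdef]; positivity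
  have hlow : 0 ≤ M2 * Q - M1^2 := by
    have := Finset.sum_mul_sq_le_sq_mul_sq Finset.univ
      (fun i => Real.sqrt (g i) * a i) (fun i => Real.sqrt (g i))
    have hrw : ∀ i : Fin N, Real.sqrt (g i) ^ 2 = g i := fun i =>
      Real.sq_sqrt (hgpos i).le
    have h1 : (∑ i, (Real.sqrt (g i) * a i) * Real.sqrt (g i)) = M1 := by
      rw [hM1def]
      refine Finset.sum_congr rfl fun i _ => ?_
      rw [show Real.sqrt (g i) * a i * Real.sqrt (g i)
          = Real.sqrt (g i) ^2 * a i by ring, hrw i]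
    have h2 : (∑ i, (Real.sqrt (g i) * a i)^2) = M2 := by
      rw [hM2def]
      refine Finset.sum_congr rfl fun i _ => ?_
      rw [mul_pow, hrw i]
    have h3 : (∑ i, Real.sqrt (g i) ^2) = Q := by
      rw [hQdef]; exact Finset.sum_congr rfl fun i _ => hrw i
    rw [h1, h2, h3] at this
    linarith [this]
  have hD2nn : 0 ≤ D2 := by
    have : (0:ℝ) ∈ {r : ℝ | ∃ i j, r = ‖μ i - μ j‖ ^ 2} :=
      ⟨⟨0, hN⟩, ⟨0, hN⟩, by simp⟩
    exact hD2.2 this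
  -- upper bound on variance
  set i0 : Fin N := ⟨0, hN⟩
  set m : ℝ := a i0 with hmdef
  have hbnd : ∀ i : Fin N, (a i - m)^2 ≤ D2 * V / s^2 := by
    intro i
    have hib : b i0 - b i = (inner ℝ (μ i - μ i0) v : ℝ) := by
      rw [hbdef]
      rw [← inner_sub_left]
      congr 1
      abel
    have hab : a i - m = (inner ℝ (μ i - μ i0) v : ℝ) / s := by
      rw [hadef, hmdef, hadef, ← hib]
      ring
    rw [hab, div_pow]
    have hinner : ((inner ℝ (μ i - μ i0) v : ℝ))^2 ≤ ‖μ i - μ i0‖^2 * V := by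
      have := abs_real_inner_le_norm (μ i - μ i0) v
      have h2 : ((inner ℝ (μ i - μ i0) v : ℝ))^2 ≤ (‖μ i - μ i0‖ * ‖v‖)^2 := by
        rw [← sq_abs]
        exact pow_le_pow_left₀ (abs_nonneg _) this 2
      calc ((inner ℝ (μ i - μ i0) v : ℝ))^2 ≤ (‖μ i - μ i0‖ * ‖v‖)^2 := h2
        _ = ‖μ i - μ i0‖^2 * V := by rw [hVdef]; ring
    have hD2i : ‖μ i - μ i0‖^2 ≤ D2 := hD2.2 ⟨i, i0, rfl⟩
    have hs2 : (0:ℝ) < s^2 := by positivity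
    have hfin : ((inner ℝ (μ i - μ i0) v : ℝ))^2 ≤ D2 * V :=
      hinner.trans (mul_le_mul_of_nonneg_right hD2i hVnn)
    exact (div_le_div_iff_of_pos_right hs2).mpr hfin
  have hupper : M2 * Q - M1^2 ≤ (D2 * V / s^2) * Q^2 := by
    have hexp1 : (∑ i, g i * (a i - m)^2) = M2 - 2*m*M1 + m^2*Q := by
      rw [hM2def, hM1def, hQdef, Finset.mul_sum, Finset.mul_sum,
        ← Finset.sum_sub_distrib, ← Finset.sum_add_distrib]
      exact Finset.sum_congr rfl fun i _ => by ring
    have hexp2 : (∑ i, g i * (a i - m)) = M1 - m*Q := by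
      rw [hM1def, hQdef, Finset.mul_sum, ← Finset.sum_sub_distrib]
      exact Finset.sum_congr rfl fun i _ => by ring
    have hvar : M2 * Q - M1^2
        = (∑ i, g i * (a i - m)^2) * Q - (∑ i, g i * (a i - m))^2 := by
      rw [hexp1, hexp2]; ring
    have hsumle : (∑ i, g i * (a i - m)^2) ≤ (D2 * V / s^2) * Q := by
      calc (∑ i, g i * (a i - m)^2) ≤ ∑ i, g i * (D2 * V / s^2) :=
            Finset.sum_le_sum fun i _ =>
              mul_le_mul_of_nonneg_left (hbnd i) (hgpos i).le
        _ = (D2 * V / s^2) * Q := by rw [← Finset.sum_mul, hQdef]; ring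
    have := sq_nonneg (∑ i, g i * (a i - m))
    nlinarith [hQpos]
  -- finish
  have hD2V : (0:ℝ) ≤ D2 * V / s^2 := by positivity
  have hDub : D ≤ D2 / s^2 * V := by
    rw [hDform]
    have h1 : (M2 * Q - M1^2) / Q^2 ≤ D2 * V / s^2 := by
      rw [div_le_iff₀ (by positivity)]
      linarith [hupper]
    have h2 : 0 ≤ V/s := by positivity
    have h3 : D2 * V / s^2 = D2/s^2*V := by ring
    linarith [h1]
  have hDlb : -(1/s * V) ≤ D := by
    rw [hDform]
    have h1 : 0 ≤ (M2 * Q - M1^2) / Q^2 := div_nonneg hlow (by positivity)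
    have : V/s = 1/s * V := by ring
    linarith [h1]
  show |iteratedFDeriv ℝ 2 f x ![v, v]| ≤ (1 / s + D2 / s ^ 2) * ‖v‖ ^ 2
  rw [hiter]
  rw [abs_le]
  constructor
  · have : (0:ℝ) ≤ D2 / s^2 * V := by positivity
    rw [show (1 / s + D2 / s ^ 2) * ‖v‖ ^ 2 = 1/s * V + D2/s^2 * V by rw [hVdef]; ring]
    linarith [hDlb]
  · have : (0:ℝ) ≤ 1/s * V := by positivity
    rw [show (1 / s + D2 / s ^ 2) * ‖v‖ ^ 2 = 1/s * V + D2/s^2 * V by rw [hVdef]; ring]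
    linarith [hDub]
end

section
/- For all x, v ∈ ℝ^d, the second directional derivative of log p_t satisfies |D²(log p_t)(x)[v,v]| ≤ ( 1/(1 − e^{−2t}) + e^{−2t}·(max_{i,j} ‖x_i − x_j‖²)/(1 − e^{−2t})² )·‖v‖². In particular, although the empirical initial measure is singular, the Hessian of the log-density of the Ornstein–Uhlenbeck flow at any time t ≥ δ > 0 is bounded in operator norm by a constant depending only on δ, t and the diameter max_{i,j} ‖x_i − x_j‖ of the data, independently of the dimension d. -/
open Real

lemma var_bound {N : ℕ} [Nonempty (Fin N)] (w b : Fin N → ℝ) (hw : ∀ i, 0 < w i)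
    (C : ℝ) (hb : ∀ i j, |b i - b j| ≤ C) :
    0 ≤ (∑ i, w i * (b i)^2) / (∑ i, w i) - ((∑ i, w i * b i)/(∑ i, w i))^2 ∧
    (∑ i, w i * (b i)^2) / (∑ i, w i) - ((∑ i, w i * b i)/(∑ i, w i))^2 ≤ C^2 := by
  set W : ℝ := ∑ i, w i with hW
  have hWpos : 0 < W := Finset.sum_pos (fun i _ => hw i) Finset.univ_nonempty
  set m : ℝ := (∑ i, w i * b i) / W with hm
  have hmW : ∑ i, w i * b i = W * m := by
    rw [hm]; field_simp
  have hid : ∑ i, w i * (b i - m)^2 = (∑ i, w i * (b i)^2) - W * m^2 := by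
    have : ∀ i : Fin N, w i * (b i - m)^2
        = w i * (b i)^2 - 2*m*(w i * b i) + m^2 * w i := by intro i; ring
    rw [Finset.sum_congr rfl (fun i _ => this i)]
    rw [Finset.sum_add_distrib, Finset.sum_sub_distrib, ← Finset.mul_sum, ← Finset.mul_sum,
      hmW, ← hW]
    ring
  have hexpr : (∑ i, w i * (b i)^2) / W - m^2 = (∑ i, w i * (b i - m)^2) / W := by
    rw [hid]; field_simp
  have hdev : ∀ i, |b i - m| ≤ C := by
    intro i
    have h1 : ∑ j, w j * (b i - b j) = W * (b i - m) := by
      have : ∀ j : Fin N, w j * (b i - b j) = w j * b i - w j * b j := fun j => by ring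
      rw [Finset.sum_congr rfl (fun j _ => this j), Finset.sum_sub_distrib, ← Finset.sum_mul,
        hmW, ← hW]
      ring
    have h2 : |∑ j, w j * (b i - b j)| ≤ ∑ j, w j * C := by
      refine (Finset.abs_sum_le_sum_abs _ _).trans (Finset.sum_le_sum fun j _ => ?_)
      rw [abs_mul, abs_of_pos (hw j)]
      exact mul_le_mul_of_nonneg_left (hb i j) (hw j).le
    rw [h1, ← Finset.sum_mul] at h2
    rw [abs_mul, abs_of_pos hWpos] at h2
    calc |b i - m| = (W * |b i - m|) / W := by field_simp
    _ ≤ (W * C) / W := by gcongr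
    _ = C := by field_simp
  constructor
  · rw [hexpr]
    apply div_nonneg ?_ hWpos.le
    exact Finset.sum_nonneg fun i _ => mul_nonneg (hw i).le (sq_nonneg _)
  · rw [hexpr]
    have : ∑ i, w i * (b i - m)^2 ≤ W * C^2 := by
      rw [hW, Finset.sum_mul]
      refine Finset.sum_le_sum fun i _ => mul_le_mul_of_nonneg_left ?_ (hw i).le
      have h := abs_le.mp (hdev i)
      nlinarith [h.1, h.2]
    calc (∑ i, w i * (b i - m)^2)/W ≤ (W * C^2)/W := by gcongr
    _ = C^2 := by field_simp

variable {E : Type*} [NormedAddCommGroup E] [InnerProductSpace ℝ E]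

set_option maxHeartbeats 1000000 in
lemma key (N : ℕ) (hN : 1 ≤ N) (μ : Fin N → E) (σ2 : ℝ) (hσ : 0 < σ2)
    (M : ℝ) (hM : 0 ≤ M) (hdist : ∀ i j, ‖μ i - μ j‖ ^ 2 ≤ M) (x v : E) :
    |iteratedFDeriv ℝ 2
        (fun y => Real.log ((N : ℝ)⁻¹ * ∑ i, Real.exp (-(2*σ2)⁻¹ * ‖y - μ i‖ ^ 2))) x ![v, v]|
      ≤ (σ2⁻¹ + M / σ2 ^ 2) * ‖v‖ ^ 2 := by
  haveI : Nonempty (Fin N) := ⟨⟨0, hN⟩⟩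
  have hσ2ne : σ2 ≠ 0 := hσ.ne'
  have hNne : (N : ℝ) ≠ 0 := Nat.cast_ne_zero.mpr (by omega)
  -- derivative of each Gaussian term
  have hw : ∀ (y : E) (i : Fin N),
      HasFDerivAt (fun z : E => Real.exp (-(2*σ2)⁻¹ * ‖z - μ i‖ ^ 2))
        ((Real.exp (-(2*σ2)⁻¹ * ‖y - μ i‖ ^ 2) * -σ2⁻¹) • innerSL ℝ (y - μ i)) y := by
    intro y i
    have h := ((((hasFDerivAt_id y).sub_const (μ i)).norm_sq).const_mul
      (-(2*σ2)⁻¹)).exp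
    convert h using 1
    ext u
    simp [ContinuousLinearMap.smul_apply, innerSL_apply_apply, smul_eq_mul]
    field_simp
    ring
    ext u
    simp [ContinuousLinearMap.smul_apply, innerSL_apply_apply, smul_eq_mul]
    field_simp
  -- derivative of p
  have hp' : ∀ y : E,
      HasFDerivAt (fun z : E => (N : ℝ)⁻¹ * ∑ i, Real.exp (-(2*σ2)⁻¹ * ‖z - μ i‖ ^ 2))
        ((N : ℝ)⁻¹ • ∑ i, (Real.exp (-(2*σ2)⁻¹ * ‖y - μ i‖ ^ 2) * -σ2⁻¹) • innerSL ℝ (y - μ i))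
        y := by
    intro y
    exact (HasFDerivAt.fun_sum fun i _ => hw y i).const_mul ((N : ℝ)⁻¹)
  -- positivity
  have hppos : ∀ y : E, 0 < (N : ℝ)⁻¹ * ∑ i, Real.exp (-(2*σ2)⁻¹ * ‖y - μ i‖ ^ 2) := by
    intro y
    apply mul_pos (by positivity)
    exact Finset.sum_pos (fun i _ => Real.exp_pos _) Finset.univ_nonempty
  -- derivative of log p
  have hlog : ∀ y : E,
      HasFDerivAt (fun z : E =>
          Real.log ((N : ℝ)⁻¹ * ∑ i, Real.exp (-(2*σ2)⁻¹ * ‖z - μ i‖ ^ 2)))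
        (((N : ℝ)⁻¹ * ∑ i, Real.exp (-(2*σ2)⁻¹ * ‖y - μ i‖ ^ 2))⁻¹ •
          ((N : ℝ)⁻¹ • ∑ i, (Real.exp (-(2*σ2)⁻¹ * ‖y - μ i‖ ^ 2) * -σ2⁻¹) • innerSL ℝ (y - μ i)))
        y := fun y => (hp' y).log (hppos y).ne'
  set f := fun y : E => Real.log ((N : ℝ)⁻¹ * ∑ i, Real.exp (-(2*σ2)⁻¹ * ‖y - μ i‖ ^ 2)) with hfdef
  have hfd : fderiv ℝ f = fun y : E =>
      (((N : ℝ)⁻¹ * ∑ i, Real.exp (-(2*σ2)⁻¹ * ‖y - μ i‖ ^ 2))⁻¹ •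
        ((N : ℝ)⁻¹ • ∑ i, (Real.exp (-(2*σ2)⁻¹ * ‖y - μ i‖ ^ 2) * -σ2⁻¹) • innerSL ℝ (y - μ i))) :=
    funext fun y => (hlog y).fderiv
  have hpc : ContDiff ℝ 2 (fun z : E => (N : ℝ)⁻¹ * ∑ i, Real.exp (-(2*σ2)⁻¹ * ‖z - μ i‖ ^ 2)) :=
    contDiff_const.mul (ContDiff.sum fun i _ =>
      (contDiff_const.mul ((contDiff_id.sub contDiff_const).norm_sq ℝ)).exp)
  have hfc : ContDiff ℝ 2 f := hpc.log fun y => (hppos y).ne'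
  have hdiff : DifferentiableAt ℝ (fderiv ℝ f) x :=
    ((hfc.fderiv_right (m := 1) (by norm_num)).differentiable one_ne_zero).differentiableAt
  have hred : iteratedFDeriv ℝ 2 f x ![v, v] = fderiv ℝ (fun y => fderiv ℝ f y v) x v := by
    rw [iteratedFDeriv_two_apply]
    rw [fderiv_clm_apply hdiff (differentiableAt_const v)]
    simp
  have hgeq : (fun y => fderiv ℝ f y v) = fun y : E =>
      ((N : ℝ)⁻¹ * ∑ i, Real.exp (-(2*σ2)⁻¹ * ‖y - μ i‖ ^ 2))⁻¹ *
        ((N : ℝ)⁻¹ * ∑ i, Real.exp (-(2*σ2)⁻¹ * ‖y - μ i‖ ^ 2) *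
          (-σ2⁻¹ * (inner ℝ (y - μ i) v : ℝ))) := by
    funext y
    rw [hfd]
    simp only [ContinuousLinearMap.smul_apply, ContinuousLinearMap.sum_apply,
      innerSL_apply_apply, smul_eq_mul]
    congr 1
    congr 1
    refine Finset.sum_congr rfl fun i _ => ?_
    ring
  have hinner : ∀ i : Fin N, HasFDerivAt (fun y : E => (inner ℝ (y - μ i) v : ℝ))
      (innerSL ℝ v) x := by
    intro i
    have heq : (fun y : E => (inner ℝ (y - μ i) v : ℝ))
        = fun y : E => innerSL ℝ v y - (inner ℝ (μ i) v : ℝ) := by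
      funext y
      simp [innerSL_apply_apply, inner_sub_left, real_inner_comm]
    rw [heq]
    exact ((innerSL ℝ v).hasFDerivAt).sub_const _
  have hterm : ∀ i : Fin N, HasFDerivAt
      (fun y : E => Real.exp (-(2*σ2)⁻¹ * ‖y - μ i‖ ^ 2) * (-σ2⁻¹ * (inner ℝ (y - μ i) v : ℝ)))
      (Real.exp (-(2*σ2)⁻¹ * ‖x - μ i‖ ^ 2) • ((-σ2⁻¹) • innerSL ℝ v) +
        (-σ2⁻¹ * (inner ℝ (x - μ i) v : ℝ)) •
          ((Real.exp (-(2*σ2)⁻¹ * ‖x - μ i‖ ^ 2) * -σ2⁻¹) • innerSL ℝ (x - μ i))) x :=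
    fun i => (hw x i).mul ((hinner i).const_mul (-σ2⁻¹))
  have hsum := (HasFDerivAt.fun_sum fun (i : Fin N) (_ : i ∈ Finset.univ) => hterm i).const_mul
    ((N : ℝ)⁻¹)
  have hinv : HasFDerivAt
      (fun y : E => ((N : ℝ)⁻¹ * ∑ i, Real.exp (-(2*σ2)⁻¹ * ‖y - μ i‖ ^ 2))⁻¹)
      ((-((((N : ℝ)⁻¹ * ∑ i, Real.exp (-(2*σ2)⁻¹ * ‖x - μ i‖ ^ 2))) ^ 2)⁻¹) •
        ((N : ℝ)⁻¹ • ∑ i, (Real.exp (-(2*σ2)⁻¹ * ‖x - μ i‖ ^ 2) * -σ2⁻¹) • innerSL ℝ (x - μ i)))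
      x := by
    have h := (hasFDerivAt_inv (hppos x).ne').comp x (hp' x)
    convert h using 1
    · rfl
    · rfl
    · rfl
    ext u
    simp only [ContinuousLinearMap.coe_comp', Function.comp_apply,
      ContinuousLinearMap.smulRight_apply, ContinuousLinearMap.one_apply,
      ContinuousLinearMap.smul_apply, ContinuousLinearMap.coe_sum',
      Finset.sum_apply, innerSL_apply_apply, smul_eq_mul,
      ContinuousLinearMap.toSpanSingleton_apply]
    ring
  have hgder : HasFDerivAt (fun y : E =>
      ((N : ℝ)⁻¹ * ∑ i, Real.exp (-(2*σ2)⁻¹ * ‖y - μ i‖ ^ 2))⁻¹ *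
        ((N : ℝ)⁻¹ * ∑ i, Real.exp (-(2*σ2)⁻¹ * ‖y - μ i‖ ^ 2) *
          (-σ2⁻¹ * (inner ℝ (y - μ i) v : ℝ))))
      (((N : ℝ)⁻¹ * ∑ i, Real.exp (-(2*σ2)⁻¹ * ‖x - μ i‖ ^ 2))⁻¹ •
          ((N : ℝ)⁻¹ • ∑ i,
            (Real.exp (-(2*σ2)⁻¹ * ‖x - μ i‖ ^ 2) • ((-σ2⁻¹) • innerSL ℝ v) +
              (-σ2⁻¹ * (inner ℝ (x - μ i) v : ℝ)) •
                ((Real.exp (-(2*σ2)⁻¹ * ‖x - μ i‖ ^ 2) * -σ2⁻¹) • innerSL ℝ (x - μ i)))) +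
        ((N : ℝ)⁻¹ * ∑ i, Real.exp (-(2*σ2)⁻¹ * ‖x - μ i‖ ^ 2) *
            (-σ2⁻¹ * (inner ℝ (x - μ i) v : ℝ))) •
          ((-((((N : ℝ)⁻¹ * ∑ i, Real.exp (-(2*σ2)⁻¹ * ‖x - μ i‖ ^ 2))) ^ 2)⁻¹) •
            ((N : ℝ)⁻¹ • ∑ i,
              (Real.exp (-(2*σ2)⁻¹ * ‖x - μ i‖ ^ 2) * -σ2⁻¹) • innerSL ℝ (x - μ i)))) x :=
    hinv.mul hsum
  rw [hred, hgeq, hgder.fderiv]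
  simp only [ContinuousLinearMap.add_apply, ContinuousLinearMap.smul_apply,
    ContinuousLinearMap.coe_sum', Finset.sum_apply, innerSL_apply_apply, smul_eq_mul,
    real_inner_self_eq_norm_sq]
  -- bound on the differences of the `b` values
  have hb : ∀ i j : Fin N,
      |(-σ2⁻¹ * (inner ℝ (x - μ i) v : ℝ)) - (-σ2⁻¹ * (inner ℝ (x - μ j) v : ℝ))|
        ≤ σ2⁻¹ * (Real.sqrt M * ‖v‖) := by
    intro i j
    have hsub : (x - μ i) - (x - μ j) = μ j - μ i := by abel
    have h1 : (-σ2⁻¹ * (inner ℝ (x - μ i) v : ℝ)) - (-σ2⁻¹ * (inner ℝ (x - μ j) v : ℝ))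
        = -σ2⁻¹ * (inner ℝ (μ j - μ i) v : ℝ) := by
      rw [← mul_sub, ← inner_sub_left, hsub]
    rw [h1, abs_mul]
    have h2 : |(-σ2⁻¹ : ℝ)| = σ2⁻¹ := by
      rw [abs_neg, abs_of_pos (inv_pos.mpr hσ)]
    rw [h2]
    refine mul_le_mul_of_nonneg_left ?_ (inv_pos.mpr hσ).le
    calc |(inner ℝ (μ j - μ i) v : ℝ)| ≤ ‖μ j - μ i‖ * ‖v‖ := abs_real_inner_le_norm _ _
    _ ≤ Real.sqrt M * ‖v‖ := by
        refine mul_le_mul_of_nonneg_right ?_ (norm_nonneg v)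
        rw [show ‖μ j - μ i‖ = Real.sqrt (‖μ j - μ i‖^2) from (Real.sqrt_sq (norm_nonneg _)).symm]
        exact Real.sqrt_le_sqrt (hdist j i)
  have hvb := var_bound (fun i => Real.exp (-(2*σ2)⁻¹ * ‖x - μ i‖ ^ 2))
      (fun i => -σ2⁻¹ * (inner ℝ (x - μ i) v : ℝ)) (fun i => Real.exp_pos _)
      (σ2⁻¹ * (Real.sqrt M * ‖v‖)) hb
  beta_reduce at hvb
  obtain ⟨hnn, hub⟩ := hvb
  -- rewrite the sums in the goal
  have e1 : ∑ i : Fin N,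
      (Real.exp (-(2*σ2)⁻¹ * ‖x - μ i‖ ^ 2) * (-σ2⁻¹ * ‖v‖ ^ 2) +
        -σ2⁻¹ * (inner ℝ (x - μ i) v : ℝ) *
          (Real.exp (-(2*σ2)⁻¹ * ‖x - μ i‖ ^ 2) * -σ2⁻¹ * (inner ℝ (x - μ i) v : ℝ)))
      = (-σ2⁻¹ * ‖v‖ ^ 2) * (∑ i, Real.exp (-(2*σ2)⁻¹ * ‖x - μ i‖ ^ 2)) +
        ∑ i, Real.exp (-(2*σ2)⁻¹ * ‖x - μ i‖ ^ 2) * (-σ2⁻¹ * (inner ℝ (x - μ i) v : ℝ))^2 := by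
    rw [Finset.sum_add_distrib]
    congr 1
    · rw [Finset.mul_sum]
      exact Finset.sum_congr rfl fun i _ => mul_comm _ _
    · exact Finset.sum_congr rfl fun i _ => by ring
  have e3 : ∑ i : Fin N, Real.exp (-(2*σ2)⁻¹ * ‖x - μ i‖ ^ 2) * -σ2⁻¹ * (inner ℝ (x - μ i) v : ℝ)
      = ∑ i, Real.exp (-(2*σ2)⁻¹ * ‖x - μ i‖ ^ 2) * (-σ2⁻¹ * (inner ℝ (x - μ i) v : ℝ)) :=
    Finset.sum_congr rfl fun i _ => by ring
  rw [e1, e3]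
  set A : ℝ := ∑ i, Real.exp (-(2*σ2)⁻¹ * ‖x - μ i‖ ^ 2) with hA
  set S1 : ℝ := ∑ i, Real.exp (-(2*σ2)⁻¹ * ‖x - μ i‖ ^ 2) * (-σ2⁻¹ * (inner ℝ (x - μ i) v : ℝ))
    with hS1
  set S2 : ℝ := ∑ i, Real.exp (-(2*σ2)⁻¹ * ‖x - μ i‖ ^ 2) * (-σ2⁻¹ * (inner ℝ (x - μ i) v : ℝ))^2
    with hS2
  have hApos : 0 < A := Finset.sum_pos (fun i _ => Real.exp_pos _) Finset.univ_nonempty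
  have halg : ∀ (n a s1 s2 c : ℝ), n ≠ 0 → a ≠ 0 →
      (n⁻¹ * a)⁻¹ * (n⁻¹ * (-c * a + s2)) + (n⁻¹ * s1) * (-((n⁻¹ * a) ^ 2)⁻¹ * (n⁻¹ * s1))
        = (s2 / a - (s1 / a)^2) - c := by
    intro n a s1 s2 c hn ha
    field_simp
    ring
  have hval : ((N : ℝ)⁻¹ * A)⁻¹ * ((N : ℝ)⁻¹ * ((-σ2⁻¹ * ‖v‖ ^ 2) * A + S2)) +
      ((N : ℝ)⁻¹ * S1) * (-(((N : ℝ)⁻¹ * A) ^ 2)⁻¹ * ((N : ℝ)⁻¹ * S1))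
      = (S2 / A - (S1 / A)^2) - σ2⁻¹ * ‖v‖ ^ 2 := by
    rw [show ((-σ2⁻¹ * ‖v‖ ^ 2) : ℝ) = -(σ2⁻¹ * ‖v‖ ^ 2) from by ring]
    exact halg (N : ℝ) A S1 S2 (σ2⁻¹ * ‖v‖ ^ 2) hNne hApos.ne'
  rw [hval]
  have hC2 : (σ2⁻¹ * (Real.sqrt M * ‖v‖))^2 = M * ‖v‖^2 / σ2^2 := by
    rw [mul_pow, mul_pow, Real.sq_sqrt hM]
    ring
  rw [hC2] at hub
  have hRHS : (σ2⁻¹ + M / σ2 ^ 2) * ‖v‖ ^ 2 = σ2⁻¹ * ‖v‖^2 + M * ‖v‖^2 / σ2^2 := by ring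
  have hspos : 0 ≤ σ2⁻¹ * ‖v‖ ^ 2 := by positivity
  rw [abs_le]
  constructor <;> [linarith; linarith]

open Set

/-- For the (unnormalized) Gaussian-mixture density
`p_t(x) = (1/N)·Σ_i exp(−‖x − e^{−t}·x_i‖²/(2·(1 − e^{−2t})))` at time `t > 0` of the
Ornstein–Uhlenbeck flow started from the empirical measure of `x₁, …, x_N ∈ ℝ^d`,
the second directional derivative of `log p_t` satisfies, for all `x, v ∈ ℝ^d`,
`|D²(log p_t)(x)[v,v]| ≤ (1/(1 − e^{−2t}) + e^{−2t}·(max_{i,j} ‖x_i − x_j‖²)/(1 − e^{−2t})²)·‖v‖²`,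
independently of the dimension `d`. -/
theorem stmt_10 (d N : ℕ) (hd : 1 ≤ d) (hN : 1 ≤ N)
    (t : ℝ) (ht : 0 < t)
    (xdata : Fin N → EuclideanSpace ℝ (Fin d))
    (p : EuclideanSpace ℝ (Fin d) → ℝ)
    (hp : ∀ x, p x = (1 / N : ℝ) *
      ∑ i, Real.exp (-‖x - Real.exp (-t) • xdata i‖ ^ 2 / (2 * (1 - Real.exp (-2 * t)))))
    (D2 : ℝ) (hD2 : IsGreatest {r : ℝ | ∃ i j, r = ‖xdata i - xdata j‖ ^ 2} D2) :
    ∀ x v : EuclideanSpace ℝ (Fin d),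
      |iteratedFDeriv ℝ 2 (fun y => Real.log (p y)) x ![v, v]|
        ≤ (1 / (1 - Real.exp (-2 * t)) +
            Real.exp (-2 * t) * D2 / (1 - Real.exp (-2 * t)) ^ 2) * ‖v‖ ^ 2 := by
  intro x v
  set σ2 : ℝ := 1 - Real.exp (-2 * t) with hσ2def
  have hexp1 : Real.exp (-2 * t) < 1 := by
    rw [Real.exp_lt_one_iff]
    linarith
  have hσ : 0 < σ2 := by simp only [hσ2def]; linarith
  have hD2nonneg : 0 ≤ D2 := by
    have h0 : (0 : ℝ) ∈ {r : ℝ | ∃ i j, r = ‖xdata i - xdata j‖ ^ 2} :=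
      ⟨⟨0, hN⟩, ⟨0, hN⟩, by simp⟩
    exact hD2.2 h0
  have hM : 0 ≤ Real.exp (-2 * t) * D2 := mul_nonneg (Real.exp_pos _).le hD2nonneg
  have hdist : ∀ i j : Fin N,
      ‖Real.exp (-t) • xdata i - Real.exp (-t) • xdata j‖ ^ 2 ≤ Real.exp (-2 * t) * D2 := by
    intro i j
    have h1 : Real.exp (-t) • xdata i - Real.exp (-t) • xdata j
        = Real.exp (-t) • (xdata i - xdata j) := by rw [smul_sub]
    rw [h1, norm_smul, mul_pow, Real.norm_eq_abs, abs_of_pos (Real.exp_pos _)]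
    have h2 : Real.exp (-t) ^ 2 = Real.exp (-2 * t) := by
      rw [sq, ← Real.exp_add]
      norm_num
      ring_nf
    rw [h2]
    exact mul_le_mul_of_nonneg_left (hD2.2 ⟨i, j, rfl⟩) (Real.exp_pos _).le
  have hfun : (fun y : EuclideanSpace ℝ (Fin d) => Real.log (p y))
      = fun y => Real.log ((N : ℝ)⁻¹ *
          ∑ i, Real.exp (-(2*σ2)⁻¹ * ‖y - Real.exp (-t) • xdata i‖ ^ 2)) := by
    funext y
    rw [hp y]
    congr 1
    rw [one_div]
    congr 1
    refine Finset.sum_congr rfl fun i _ => ?_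
    congr 1
    rw [hσ2def]
    ring
  rw [hfun, one_div]
  have := key N hN (fun i => Real.exp (-t) • xdata i) σ2 hσ (Real.exp (-2 * t) * D2) hM
    hdist x v
  convert this using 3
end

section
/- For every k with 0 ≤ k ≤ K: sup_x |v^{(k)}(x)| ≤ sup_x |φ(x)|, and v^{(k)} is Lipschitz with constant at most L_φ · exp( (1 + L) · Σ_{ℓ=k}^{K−1} s_ℓ ). (This is the gradient estimate of the paper's Lemma on the value functions of the discretized time-reversed diffusion, with s_ℓ = g(T − t_ℓ) − g(T − t_{ℓ+1}).) -/
open Set MeasureTheory Finset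

/-- Gradient estimate for the value functions of the discretized time-reversed
diffusion: with `γ` the standard Gaussian on `ℝ^d`, `φ` bounded and `L_φ`-Lipschitz,
`v^{(K)} = φ` and `v^{(k)}(x) = ∫ v^{(k+1)}(e^{−s_k}·x + (1 − e^{−s_k})·S_k(x) + σ_k·z) dγ(z)`
with each `S_k` Lipschitz with constant `L`, one has for every `0 ≤ k ≤ K`:
`sup |v^{(k)}| ≤ sup |φ|`, and `v^{(k)}` is Lipschitz with constant at most
`L_φ · exp((1 + L) · Σ_{ℓ=k}^{K−1} s_ℓ)`. -/
theorem stmt_14 (d K : ℕ) (hd : 1 ≤ d) (hK : 1 ≤ K)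
    (γ : Measure (EuclideanSpace ℝ (Fin d)))
    (hγ : γ = Measure.map (⇑(EuclideanSpace.equiv (Fin d) ℝ).symm)
      (Measure.pi fun _ : Fin d => ProbabilityTheory.gaussianReal 0 1))
    (φ : EuclideanSpace ℝ (Fin d) → ℝ) (Lφ : ℝ) (hLφ : 0 ≤ Lφ)
    (hφ_bdd : ∃ C, ∀ x, |φ x| ≤ C)
    (hφ_lip : ∀ x y, |φ x - φ y| ≤ Lφ * ‖x - y‖)
    (s σ : ℕ → ℝ) (hs : ∀ k, 0 ≤ s k) (hσ : ∀ k, 0 ≤ σ k)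
    (S : ℕ → EuclideanSpace ℝ (Fin d) → EuclideanSpace ℝ (Fin d))
    (L : ℝ) (hL : 0 ≤ L)
    (hS_lip : ∀ k x y, ‖S k x - S k y‖ ≤ L * ‖x - y‖)
    (v : ℕ → EuclideanSpace ℝ (Fin d) → ℝ)
    (hvK : v K = φ)
    (hrec : ∀ k < K, ∀ x, v k x =
      ∫ z, v (k + 1)
        (Real.exp (-(s k)) • x + (1 - Real.exp (-(s k))) • S k x + σ k • z) ∂γ) :
    ∀ k ≤ K,
      (∀ x, |v k x| ≤ ⨆ y, |φ y|) ∧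
      (∀ x y, |v k x - v k y| ≤
        Lφ * Real.exp ((1 + L) * ∑ ℓ ∈ Finset.Ico k K, s ℓ) * ‖x - y‖) := by
  have hγprob : IsProbabilityMeasure γ := by
    rw [hγ]
    exact Measure.isProbabilityMeasure_map
      ((EuclideanSpace.equiv (Fin d) ℝ).symm.continuous.measurable.aemeasurable)
  obtain ⟨B, hB⟩ := hφ_bdd
  have hbdd : BddAbove (Set.range fun y => |φ y|) := ⟨B, by rintro _ ⟨y, rfl⟩; exact hB y⟩
  have hC : ∀ x, |φ x| ≤ ⨆ y, |φ y| := fun x => le_ciSup hbdd x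
  have hC0 : 0 ≤ ⨆ y, |φ y| := le_trans (abs_nonneg _) (hC 0)
  set C := ⨆ y, |φ y| with hCdef
  suffices h : ∀ n k, k ≤ K → K - k = n →
      (∀ x, |v k x| ≤ C) ∧ (∀ x y, |v k x - v k y| ≤
        Lφ * Real.exp ((1 + L) * ∑ ℓ ∈ Finset.Ico k K, s ℓ) * ‖x - y‖) by
    intro k hk
    exact h (K - k) k hk rfl
  intro n
  induction n with
  | zero =>
    intro k hk h0
    have hkK : k = K := le_antisymm hk (by omega)
    subst hkK
    rw [hvK]
    simp only [Finset.Ico_self, Finset.sum_empty, mul_zero, Real.exp_zero, mul_one]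
    exact ⟨hC, hφ_lip⟩
  | succ n ih =>
    intro k hk hn
    have hkK : k < K := by omega
    obtain ⟨ihb, ihl⟩ := ih (k + 1) hkK (by omega)
    set M := Lφ * Real.exp ((1 + L) * ∑ ℓ ∈ Finset.Ico (k + 1) K, s ℓ) with hMdef
    have hM0 : 0 ≤ M := mul_nonneg hLφ (Real.exp_pos _).le
    have hcont : Continuous (v (k + 1)) := by
      have hlip : LipschitzWith (Real.toNNReal M) (v (k + 1)) := by
        apply LipschitzWith.of_dist_le_mul
        intro a b
        rw [Real.dist_eq, dist_eq_norm, Real.coe_toNNReal M hM0]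
        exact ihl a b
      exact hlip.continuous
    have hint : ∀ x : EuclideanSpace ℝ (Fin d), Integrable (fun z =>
        v (k + 1) (Real.exp (-(s k)) • x + (1 - Real.exp (-(s k))) • S k x + σ k • z)) γ := by
      intro x
      have hc : Continuous fun z : EuclideanSpace ℝ (Fin d) =>
          Real.exp (-(s k)) • x + (1 - Real.exp (-(s k))) • S k x + σ k • z := by
        fun_prop
      refine ⟨(hcont.comp hc).aestronglyMeasurable, ?_⟩
      apply MeasureTheory.HasFiniteIntegral.of_bounded (C := C)
      filter_upwards with z
      rw [Real.norm_eq_abs]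
      exact ihb _
    constructor
    · intro x
      rw [hrec k hkK x, ← Real.norm_eq_abs]
      calc ‖∫ z, v (k + 1)
            (Real.exp (-(s k)) • x + (1 - Real.exp (-(s k))) • S k x + σ k • z) ∂γ‖
          ≤ C * (γ Set.univ).toReal := by
            apply norm_integral_le_of_norm_le_const
            filter_upwards with z
            rw [Real.norm_eq_abs]
            exact ihb _
        _ = C := by simp
    · intro x y
      have he1 : Real.exp (-(s k)) ≤ 1 := by
        rw [← Real.exp_zero]
        exact Real.exp_le_exp.mpr (by linarith [hs k])
      have he0 : (0 : ℝ) < Real.exp (-(s k)) := Real.exp_pos _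
      set c := Real.exp (-(s k)) + (1 - Real.exp (-(s k))) * L with hcdef
      have hc0 : 0 ≤ c := add_nonneg he0.le (mul_nonneg (by linarith) hL)
      have key : ∀ z : EuclideanSpace ℝ (Fin d),
          ‖v (k + 1) (Real.exp (-(s k)) • x + (1 - Real.exp (-(s k))) • S k x + σ k • z)
            - v (k + 1) (Real.exp (-(s k)) • y + (1 - Real.exp (-(s k))) • S k y + σ k • z)‖
            ≤ M * (c * ‖x - y‖) := by
        intro z
        rw [Real.norm_eq_abs]
        have hdiff : (Real.exp (-(s k)) • x + (1 - Real.exp (-(s k))) • S k x + σ k • z)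
            - (Real.exp (-(s k)) • y + (1 - Real.exp (-(s k))) • S k y + σ k • z)
            = Real.exp (-(s k)) • (x - y) + (1 - Real.exp (-(s k))) • (S k x - S k y) := by
          rw [smul_sub, smul_sub]
          abel
        calc |v (k + 1) (Real.exp (-(s k)) • x + (1 - Real.exp (-(s k))) • S k x + σ k • z)
              - v (k + 1) (Real.exp (-(s k)) • y + (1 - Real.exp (-(s k))) • S k y + σ k • z)|
            ≤ M * ‖(Real.exp (-(s k)) • x + (1 - Real.exp (-(s k))) • S k x + σ k • z)
              - (Real.exp (-(s k)) • y + (1 - Real.exp (-(s k))) • S k y + σ k • z)‖ := ihl _ _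
          _ ≤ M * (c * ‖x - y‖) := by
              apply mul_le_mul_of_nonneg_left _ hM0
              rw [hdiff]
              calc ‖Real.exp (-(s k)) • (x - y) + (1 - Real.exp (-(s k))) • (S k x - S k y)‖
                  ≤ ‖Real.exp (-(s k)) • (x - y)‖
                    + ‖(1 - Real.exp (-(s k))) • (S k x - S k y)‖ := norm_add_le _ _
                _ = Real.exp (-(s k)) * ‖x - y‖
                    + (1 - Real.exp (-(s k))) * ‖S k x - S k y‖ := by
                    rw [norm_smul, norm_smul, Real.norm_eq_abs, Real.norm_eq_abs,
                      abs_of_pos he0, abs_of_nonneg (by linarith : (0:ℝ) ≤ 1 - Real.exp (-(s k)))]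
                _ ≤ Real.exp (-(s k)) * ‖x - y‖
                    + (1 - Real.exp (-(s k))) * (L * ‖x - y‖) := by
                    gcongr
                    exact hS_lip k x y
                _ = c * ‖x - y‖ := by rw [hcdef]; ring
      rw [hrec k hkK x, hrec k hkK y, ← integral_sub (hint x) (hint y), ← Real.norm_eq_abs]
      have hcle : c ≤ Real.exp ((1 + L) * s k) := by
        have h2 : 1 - Real.exp (-(s k)) ≤ s k := by linarith [Real.add_one_le_exp (-(s k))]
        have h3 : c ≤ 1 + s k * L := by nlinarith [hs k]
        have h4 : 1 + s k * L ≤ Real.exp (s k * L) := by linarith [Real.add_one_le_exp (s k * L)]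
        have h5 : Real.exp (s k * L) ≤ Real.exp ((1 + L) * s k) :=
          Real.exp_le_exp.mpr (by nlinarith [hs k])
        linarith
      calc ‖∫ z, (v (k + 1) (Real.exp (-(s k)) • x + (1 - Real.exp (-(s k))) • S k x + σ k • z)
            - v (k + 1) (Real.exp (-(s k)) • y + (1 - Real.exp (-(s k))) • S k y + σ k • z)) ∂γ‖
          ≤ (M * (c * ‖x - y‖)) * (γ Set.univ).toReal :=
            norm_integral_le_of_norm_le_const (Filter.Eventually.of_forall key)
        _ = M * (c * ‖x - y‖) := by simp
        _ ≤ Lφ * Real.exp ((1 + L) * ∑ ℓ ∈ Finset.Ico k K, s ℓ) * ‖x - y‖ := by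
            rw [Finset.sum_eq_sum_Ico_succ_bot hkK, hMdef]
            calc Lφ * Real.exp ((1 + L) * ∑ ℓ ∈ Finset.Ico (k + 1) K, s ℓ) * (c * ‖x - y‖)
                = Lφ * (c * Real.exp ((1 + L) * ∑ ℓ ∈ Finset.Ico (k + 1) K, s ℓ)) * ‖x - y‖ := by
                  ring
              _ ≤ Lφ * (Real.exp ((1 + L) * s k)
                  * Real.exp ((1 + L) * ∑ ℓ ∈ Finset.Ico (k + 1) K, s ℓ)) * ‖x - y‖ := by
                  gcongr
              _ = Lφ * Real.exp ((1 + L) * (s k + ∑ ℓ ∈ Finset.Ico (k + 1) K, s ℓ)) * ‖x - y‖ := by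
                  rw [← Real.exp_add, mul_add]
end

section
/- Under these hypotheses, |U(T, m_0) − U(0, m_T)| ≤ λ·M·√T·ε. (This is the score-mismatch estimate for the two-state generative model: the change of the backward-Kolmogorov value function U along the time-reversed forward marginals is controlled by the score-matching error ε.) -/
open Set MeasureTheory

set_option maxHeartbeats 2000000

/-- Score-mismatch estimate for the two-state generative model: if `m` is a forward
two-state curve with score `s`, `s*` is a continuous approximate score with
score-matching error at most `ε²`, and `U` is a `C¹` solution of the backward
Kolmogorov equation driven by `s*` whose spatial partial derivatives are bounded
by `M`, then `|U(T, m_0) − U(0, m_T)| ≤ λ·M·√T·ε`. -/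
theorem stmt_17 (lam T M ε : ℝ) (hlam : 0 < lam) (hT : 0 < T)
    (hM : 0 ≤ M) (hε : 0 ≤ ε)
    (m : ℝ → Fin 2 → ℝ)
    (hpos : ∀ t ∈ Set.Icc 0 T, ∀ i, 0 < m t i)
    (hsum : ∀ t ∈ Set.Icc 0 T, m t 0 + m t 1 = 1)
    (hfwd : ∀ t ∈ Set.Icc 0 T, ∀ i : Fin 2,
      HasDerivWithinAt (fun u => m u i) (lam / 2 * (m t (1 - i) - m t i))
        (Set.Icc 0 T) t)
    (s : ℝ → Fin 2 → ℝ)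
    (hs : ∀ t i, s t i = (m t i - m t (1 - i)) / m t i)
    (sstar : ℝ → Fin 2 → ℝ)
    (hsstar_cont : ∀ i, ContinuousOn (fun t => sstar t i) (Set.Icc 0 T))
    (hscore : ∑ i : Fin 2, ∫ t in (0:ℝ)..T, (s t i - sstar t i) ^ 2 * m t i ≤ ε ^ 2)
    (U : ℝ → ℝ → ℝ → ℝ)
    (hU_smooth : ContDiffOn ℝ 1 (fun q : ℝ × ℝ × ℝ => U q.1 q.2.1 q.2.2)
      (Set.Icc 0 T ×ˢ (Set.univ : Set (ℝ × ℝ))))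
    (hU_bound : ∀ t ∈ Set.Icc 0 T, ∀ x₀ x₁ : ℝ,
      |deriv (fun y => U t y x₁) x₀| ≤ M ∧ |deriv (fun y => U t x₀ y) x₁| ≤ M)
    (hPDE : ∀ t ∈ Set.Icc 0 T, ∀ x₀ x₁ : ℝ,
      derivWithin (fun u => U u x₀ x₁) (Set.Icc 0 T) t +
        lam / 2 *
          (deriv (fun y => U t y x₁) x₀ *
              ((1 - sstar (T - t) 1) * x₁ - (1 - sstar (T - t) 0) * x₀) +
            deriv (fun y => U t x₀ y) x₁ *
              ((1 - sstar (T - t) 0) * x₀ - (1 - sstar (T - t) 1) * x₁)) = 0) :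
    |U T (m 0 0) (m 0 1) - U 0 (m T 0) (m T 1)| ≤ lam * M * Real.sqrt T * ε := by
  classical
  set F : ℝ × ℝ × ℝ → ℝ := fun q => U q.1 q.2.1 q.2.2 with hFdef
  set S : Set (ℝ × ℝ × ℝ) := Set.Icc 0 T ×ˢ (Set.univ : Set (ℝ × ℝ)) with hSdef
  have hUD : UniqueDiffOn ℝ S := (uniqueDiffOn_Icc hT).prod uniqueDiffOn_univ
  have hdiff : DifferentiableOn ℝ F S := hU_smooth.differentiableOn one_ne_zero
  have hcontD : ContinuousOn (fun q => fderivWithin ℝ F S q) S :=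
    hU_smooth.continuousOn_fderivWithin hUD le_rfl
  have hmemS : ∀ t ∈ Icc (0:ℝ) T, ∀ x₀ x₁ : ℝ, ((t, x₀, x₁) : ℝ × ℝ × ℝ) ∈ S := by
    intro t ht x₀ x₁
    exact Set.mem_prod.mpr ⟨ht, Set.mem_univ _⟩
  -- identification of spatial partial derivatives
  have hB : ∀ t ∈ Icc (0:ℝ) T, ∀ x₀ x₁ : ℝ,
      deriv (fun y => U t y x₁) x₀ = fderivWithin ℝ F S (t, x₀, x₁) (0, 1, 0) := by
    intro t ht x₀ x₁
    have hFd : HasFDerivWithinAt F (fderivWithin ℝ F S (t, x₀, x₁)) S (t, x₀, x₁) :=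
      (hdiff _ (hmemS t ht x₀ x₁)).hasFDerivWithinAt
    have hι : HasDerivWithinAt (fun y : ℝ => ((t, y, x₁) : ℝ × ℝ × ℝ)) (0, 1, 0)
        Set.univ x₀ :=
      (((hasDerivAt_const x₀ t).prodMk
        ((hasDerivAt_id x₀).prodMk (hasDerivAt_const x₀ x₁)))).hasDerivWithinAt
    have hcomp := hFd.comp_hasDerivWithinAt (t := S) x₀ hι
      (fun y _ => hmemS t ht y x₁)
    have : HasDerivAt (fun y => U t y x₁)
        (fderivWithin ℝ F S (t, x₀, x₁) (0, 1, 0)) x₀ :=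
      (hasDerivWithinAt_univ.mp hcomp)
    exact this.deriv
  have hC : ∀ t ∈ Icc (0:ℝ) T, ∀ x₀ x₁ : ℝ,
      deriv (fun y => U t x₀ y) x₁ = fderivWithin ℝ F S (t, x₀, x₁) (0, 0, 1) := by
    intro t ht x₀ x₁
    have hFd : HasFDerivWithinAt F (fderivWithin ℝ F S (t, x₀, x₁)) S (t, x₀, x₁) :=
      (hdiff _ (hmemS t ht x₀ x₁)).hasFDerivWithinAt
    have hι : HasDerivWithinAt (fun y : ℝ => ((t, x₀, y) : ℝ × ℝ × ℝ)) (0, 0, 1)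
        Set.univ x₁ :=
      (((hasDerivAt_const x₁ t).prodMk
        ((hasDerivAt_const x₁ x₀).prodMk (hasDerivAt_id x₁)))).hasDerivWithinAt
    have hcomp := hFd.comp_hasDerivWithinAt (t := S) x₁ hι
      (fun y _ => hmemS t ht x₀ y)
    have : HasDerivAt (fun y => U t x₀ y)
        (fderivWithin ℝ F S (t, x₀, x₁) (0, 0, 1)) x₁ :=
      (hasDerivWithinAt_univ.mp hcomp)
    exact this.deriv
  have hA : ∀ t ∈ Icc (0:ℝ) T, ∀ x₀ x₁ : ℝ,
      derivWithin (fun u => U u x₀ x₁) (Icc 0 T) t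
        = fderivWithin ℝ F S (t, x₀, x₁) (1, 0, 0) := by
    intro t ht x₀ x₁
    have hFd : HasFDerivWithinAt F (fderivWithin ℝ F S (t, x₀, x₁)) S (t, x₀, x₁) :=
      (hdiff _ (hmemS t ht x₀ x₁)).hasFDerivWithinAt
    have hι : HasDerivWithinAt (fun u : ℝ => ((u, x₀, x₁) : ℝ × ℝ × ℝ)) (1, 0, 0)
        (Icc 0 T) t :=
      (((hasDerivAt_id t).prodMk
        ((hasDerivAt_const t x₀).prodMk (hasDerivAt_const t x₁)))).hasDerivWithinAt
    have hcomp := hFd.comp_hasDerivWithinAt (t := S) t hι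
      (fun u hu => hmemS u hu x₀ x₁)
    have : HasDerivWithinAt (fun u => U u x₀ x₁)
        (fderivWithin ℝ F S (t, x₀, x₁) (1, 0, 0)) (Icc 0 T) t := hcomp
    exact this.derivWithin (uniqueDiffOn_Icc hT t ht)
  -- the time-reversed curve
  have hwmem : ∀ t ∈ Icc (0:ℝ) T, T - t ∈ Icc (0:ℝ) T := by
    intro t ht
    exact ⟨by linarith [ht.2], by linarith [ht.1]⟩
  have hmc : ∀ i : Fin 2, ContinuousOn (fun t => m t i) (Icc 0 T) :=
    fun i t ht => (hfwd t ht i).continuousWithinAt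
  set c : ℝ → Fin 2 → ℝ :=
    fun t i => lam / 2 * (m (T - t) (1 - i) - m (T - t) i) * (-1) with hcdef
  have hmc' : ∀ t ∈ Icc (0:ℝ) T, ∀ i : Fin 2,
      HasDerivWithinAt (fun u => m (T - u) i) (c t i) (Icc 0 T) t := by
    intro t ht i
    have hw : HasDerivWithinAt (fun u : ℝ => T - u) (-1) (Icc 0 T) t := by
      simpa using (hasDerivWithinAt_id t (Icc 0 T)).const_sub T
    exact (hfwd (T - t) (hwmem t ht) i).comp t hw (fun u hu => hwmem u hu)
  set G' : ℝ → ℝ := fun t =>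
    fderivWithin ℝ F S (t, m (T - t) 0, m (T - t) 1) (1, c t 0, c t 1) with hG'def
  set g : ℝ → ℝ := fun t => U t (m (T - t) 0) (m (T - t) 1) with hgdef
  have hφmem : ∀ t ∈ Icc (0:ℝ) T,
      ((t, m (T - t) 0, m (T - t) 1) : ℝ × ℝ × ℝ) ∈ S :=
    fun t ht => hmemS t ht _ _
  have hg' : ∀ t ∈ Icc (0:ℝ) T, HasDerivWithinAt g (G' t) (Icc 0 T) t := by
    intro t ht
    have hφ : HasDerivWithinAt
        (fun u : ℝ => ((u, m (T - u) 0, m (T - u) 1) : ℝ × ℝ × ℝ))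
        (1, c t 0, c t 1) (Icc 0 T) t :=
      (hasDerivWithinAt_id t _).prodMk ((hmc' t ht 0).prodMk (hmc' t ht 1))
    have hFd : HasFDerivWithinAt F
        (fderivWithin ℝ F S (t, m (T - t) 0, m (T - t) 1)) S
        (t, m (T - t) 0, m (T - t) 1) :=
      (hdiff _ (hφmem t ht)).hasFDerivWithinAt
    exact hFd.comp_hasDerivWithinAt t hφ (fun u hu => hφmem u hu)
  -- continuity of G'
  have hφcont : ContinuousOn
      (fun t : ℝ => ((t, m (T - t) 0, m (T - t) 1) : ℝ × ℝ × ℝ)) (Icc 0 T) := by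
    have hw : ContinuousOn (fun t : ℝ => T - t) (Icc 0 T) :=
      (continuous_const.sub continuous_id).continuousOn
    exact continuousOn_id.prodMk
      (((hmc 0).comp hw (fun u hu => hwmem u hu)).prodMk
        ((hmc 1).comp hw (fun u hu => hwmem u hu)))
  have hccont : ∀ i : Fin 2, ContinuousOn (fun t => c t i) (Icc 0 T) := by
    intro i
    have hw : ContinuousOn (fun t : ℝ => T - t) (Icc 0 T) :=
      (continuous_const.sub continuous_id).continuousOn
    exact ((continuousOn_const.mul
      (((hmc (1 - i)).comp hw (fun u hu => hwmem u hu)).sub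
        ((hmc i).comp hw (fun u hu => hwmem u hu)))).mul continuousOn_const)
  have hG'cont : ContinuousOn G' (Icc 0 T) := by
    have h1 : ContinuousOn
        (fun t => fderivWithin ℝ F S (t, m (T - t) 0, m (T - t) 1)) (Icc 0 T) :=
      hcontD.comp hφcont (fun t ht => hφmem t ht)
    have h2 : ContinuousOn (fun t : ℝ => ((1, c t 0, c t 1) : ℝ × ℝ × ℝ))
        (Icc 0 T) :=
      continuousOn_const.prodMk ((hccont 0).prodMk (hccont 1))
    exact h1.clm_apply h2
  have huIcc : uIcc (0:ℝ) T = Icc 0 T := uIcc_of_le hT.le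
  have hG'int : IntervalIntegrable G' volume 0 T := by
    apply ContinuousOn.intervalIntegrable
    rwa [huIcc]
  have hgcont : ContinuousOn g (Icc 0 T) := fun t ht => (hg' t ht).continuousWithinAt
  have hFTC : ∫ t in (0:ℝ)..T, G' t = g T - g 0 :=
    intervalIntegral.integral_eq_sub_of_hasDeriv_right_of_le hT.le hgcont
      (fun t ht =>
        ((hg' t (Ioo_subset_Icc_self ht)).hasDerivAt
          (Icc_mem_nhds ht.1 ht.2)).hasDerivWithinAt) hG'int
  -- pointwise bound on G'
  have hkey : ∀ t ∈ Icc (0:ℝ) T, |G' t| ≤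
      lam * M * (|s (T - t) 0 - sstar (T - t) 0| * m (T - t) 0 +
        |s (T - t) 1 - sstar (T - t) 1| * m (T - t) 1) := by
    intro t ht
    have hτ : T - t ∈ Icc (0:ℝ) T := hwmem t ht
    set x₀ : ℝ := m (T - t) 0 with hx₀def
    set x₁ : ℝ := m (T - t) 1 with hx₁def
    set D := fderivWithin ℝ F S (t, x₀, x₁) with hDdef
    have hvdecomp : ((1, c t 0, c t 1) : ℝ × ℝ × ℝ)
        = (1, 0, 0) + (c t 0) • ((0:ℝ), (1:ℝ), (0:ℝ))
          + (c t 1) • ((0:ℝ), (0:ℝ), (1:ℝ)) := by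
      simp [Prod.ext_iff]
    have hGval : G' t = D (1, 0, 0) + c t 0 * D (0, 1, 0) + c t 1 * D (0, 0, 1) := by
      have h0 : G' t = D (1, c t 0, c t 1) := rfl
      rw [h0, hvdecomp, map_add, map_add, D.map_smul, D.map_smul, smul_eq_mul, smul_eq_mul]
    have hpde := hPDE t ht x₀ x₁
    rw [hA t ht x₀ x₁, hB t ht x₀ x₁, hC t ht x₀ x₁] at hpde
    have hbB := (hU_bound t ht x₀ x₁).1
    have hbC := (hU_bound t ht x₀ x₁).2
    rw [hB t ht x₀ x₁] at hbB
    rw [hC t ht x₀ x₁] at hbC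
    have hm0 : 0 < x₀ := hpos _ hτ 0
    have hm1 : 0 < x₁ := hpos _ hτ 1
    have hs0 : s (T - t) 0 * x₀ = x₀ - x₁ := by
      have := hs (T - t) 0
      rw [show ((1:Fin 2) - 0) = 1 from rfl] at this
      rw [this, ← hx₀def, ← hx₁def]
      field_simp
    have hs1 : s (T - t) 1 * x₁ = x₁ - x₀ := by
      have := hs (T - t) 1
      rw [show ((1:Fin 2) - 1) = 0 from rfl] at this
      rw [this, ← hx₀def, ← hx₁def]
      field_simp
    have hc0 : c t 0 = lam / 2 * (x₁ - x₀) * (-1) := by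
      rw [hcdef]; norm_num; exact Or.inl rfl
    have hc1 : c t 1 = lam / 2 * (x₀ - x₁) * (-1) := by
      rw [hcdef]; norm_num; exact Or.inl rfl
    set B := D ((0:ℝ), (1:ℝ), (0:ℝ)) with hBdef
    set C := D ((0:ℝ), (0:ℝ), (1:ℝ)) with hCdef
    set R : ℝ := (s (T - t) 1 - sstar (T - t) 1) * x₁
      + (sstar (T - t) 0 - s (T - t) 0) * x₀ with hRdef
    have hG : G' t = -(lam / 2) * (B - C) * R := by
      rw [hGval, hc0, hc1, hRdef]
      linear_combination hpde + (lam / 2 * (B - C)) * hs1 - (lam / 2 * (B - C)) * hs0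
    have hRabs : |R| ≤ |s (T - t) 1 - sstar (T - t) 1| * x₁
        + |s (T - t) 0 - sstar (T - t) 0| * x₀ := by
      calc |R| ≤ |(s (T - t) 1 - sstar (T - t) 1) * x₁|
          + |(sstar (T - t) 0 - s (T - t) 0) * x₀| := abs_add_le _ _
        _ = |s (T - t) 1 - sstar (T - t) 1| * x₁
          + |s (T - t) 0 - sstar (T - t) 0| * x₀ := by
            rw [abs_mul, abs_mul, abs_of_pos hm0, abs_of_pos hm1, abs_sub_comm (sstar (T-t) 0)]
    have hBC : |B - C| ≤ 2 * M := by
      calc |B - C| ≤ |B| + |C| := abs_sub _ _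
        _ ≤ 2 * M := by linarith
    have habsG : |G' t| = lam / 2 * (|B - C| * |R|) := by
      rw [hG, abs_mul, abs_mul, abs_neg, abs_of_pos (by linarith : (0:ℝ) < lam / 2)]
      ring
    rw [habsG]
    have hRnn : (0:ℝ) ≤ |R| := abs_nonneg _
    calc lam / 2 * (|B - C| * |R|) ≤ lam / 2 * ((2 * M) * (|s (T - t) 1 - sstar (T - t) 1| * x₁
        + |s (T - t) 0 - sstar (T - t) 0| * x₀)) := by
          apply mul_le_mul_of_nonneg_left _ (by linarith : (0:ℝ) ≤ lam / 2)
          exact mul_le_mul hBC hRabs hRnn (by linarith)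
      _ = lam * M * (|s (T - t) 0 - sstar (T - t) 0| * x₀
        + |s (T - t) 1 - sstar (T - t) 1| * x₁) := by ring
  -- continuity of score error pieces
  have hscont : ∀ i : Fin 2, ContinuousOn (fun τ => s τ i) (Icc 0 T) := by
    intro i
    have : ContinuousOn (fun τ => (m τ i - m τ (1 - i)) / m τ i) (Icc 0 T) :=
      ((hmc i).sub (hmc (1 - i))).div (hmc i) (fun τ hτ => (hpos τ hτ i).ne')
    exact this.congr (fun τ _ => hs τ i)
  set hfun : ℝ → ℝ := fun τ => |s τ 0 - sstar τ 0| * m τ 0 + |s τ 1 - sstar τ 1| * m τ 1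
    with hhfundef
  set kfun : ℝ → ℝ := fun τ => (s τ 0 - sstar τ 0) ^ 2 * m τ 0
    + (s τ 1 - sstar τ 1) ^ 2 * m τ 1 with hkfundef
  have hhcont : ContinuousOn hfun (Icc 0 T) :=
    ((((hscont 0).sub (hsstar_cont 0)).abs.mul (hmc 0)).add
      ((((hscont 1).sub (hsstar_cont 1)).abs.mul (hmc 1))))
  have hkcont : ContinuousOn kfun (Icc 0 T) :=
    (((((hscont 0).sub (hsstar_cont 0)).pow 2).mul (hmc 0)).add
      (((((hscont 1).sub (hsstar_cont 1)).pow 2).mul (hmc 1))))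
  have hhint : IntervalIntegrable hfun volume 0 T := by
    apply ContinuousOn.intervalIntegrable; rwa [huIcc]
  have hkint : IntervalIntegrable kfun volume 0 T := by
    apply ContinuousOn.intervalIntegrable; rwa [huIcc]
  -- the score integral bound
  have hIk : ∫ τ in (0:ℝ)..T, kfun τ ≤ ε ^ 2 := by
    rw [Fin.sum_univ_two] at hscore
    have i0 : IntervalIntegrable (fun τ => (s τ 0 - sstar τ 0) ^ 2 * m τ 0) volume 0 T := by
      apply ContinuousOn.intervalIntegrable; rw [huIcc]
      exact (((hscont 0).sub (hsstar_cont 0)).pow 2).mul (hmc 0)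
    have i1 : IntervalIntegrable (fun τ => (s τ 1 - sstar τ 1) ^ 2 * m τ 1) volume 0 T := by
      apply ContinuousOn.intervalIntegrable; rw [huIcc]
      exact (((hscont 1).sub (hsstar_cont 1)).pow 2).mul (hmc 1)
    have := intervalIntegral.integral_add i0 i1
    rw [hkfundef]
    rw [this]  -- goal: sum ≤ ε^2
    linarith
  have hsqT : (0:ℝ) < Real.sqrt T := Real.sqrt_pos.mpr hT
  set rT : ℝ := Real.sqrt T with hrTdef
  have hTsq : rT * rT = T := Real.mul_self_sqrt hT.le
  -- main integral estimate: ∫ hfun ≤ √T * ε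
  have hIh : ∫ τ in (0:ℝ)..T, hfun τ ≤ rT * ε := by
    refine le_of_forall_gt_imp_ge_of_dense ?_
    intro b hb
    have hb0 : 0 < b := lt_of_le_of_lt (by positivity) hb
    set e : ℝ := b / rT with hedef
    have he0 : 0 < e := div_pos hb0 hsqT
    have heε : ε ≤ e := by
      rw [hedef, le_div_iff₀ hsqT]
      calc ε * rT = rT * ε := by ring
        _ ≤ b := hb.le
    set a : ℝ := e / rT with hadef
    have ha0 : 0 < a := div_pos he0 hsqT
    have hpt : ∀ τ ∈ Icc (0:ℝ) T, hfun τ ≤ kfun τ / (2 * a) + a / 2 := by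
      intro τ hτ
      have h0 := hpos τ hτ 0
      have h1 := hpos τ hτ 1
      have hsu := hsum τ hτ
      have key : hfun τ * (2 * a) ≤ kfun τ + a ^ 2 := by
        have e0 := mul_nonneg h0.le (sq_nonneg (|s τ 0 - sstar τ 0| - a))
        have e1 := mul_nonneg h1.le (sq_nonneg (|s τ 1 - sstar τ 1| - a))
        have a0 := sq_abs (s τ 0 - sstar τ 0)
        have a1 := sq_abs (s τ 1 - sstar τ 1)
        simp only [hhfundef, hkfundef]
        nlinarith [e0, e1, a0, a1, hsu]
      have h2a : (0:ℝ) < 2 * a := by linarith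
      calc hfun τ ≤ (kfun τ + a ^ 2) / (2 * a) := by
            rw [le_div_iff₀ h2a]; exact key
        _ = kfun τ / (2 * a) + a / 2 := by field_simp
    have hbint : IntervalIntegrable (fun τ => kfun τ / (2 * a) + a / 2) volume 0 T :=
      (hkint.div_const _).add (intervalIntegrable_const)
    have hmono := intervalIntegral.integral_mono_on hT.le hhint hbint hpt
    have hcalc : ∫ τ in (0:ℝ)..T, (kfun τ / (2 * a) + a / 2)
        = (∫ τ in (0:ℝ)..T, kfun τ) / (2 * a) + (T - 0) * (a / 2) := by
      rw [intervalIntegral.integral_add (hkint.div_const _) intervalIntegrable_const,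
        intervalIntegral.integral_div, intervalIntegral.integral_const, smul_eq_mul]
    have h2a : (0:ℝ) < 2 * a := by linarith
    have hfin : (∫ τ in (0:ℝ)..T, kfun τ) / (2 * a) + (T - 0) * (a / 2)
        ≤ rT * e := by
      have he2 : ε ^ 2 ≤ e ^ 2 := by nlinarith
      have hIk2 : (∫ τ in (0:ℝ)..T, kfun τ) ≤ e ^ 2 := le_trans hIk he2
      have h1 : (∫ τ in (0:ℝ)..T, kfun τ) / (2 * a) ≤ e ^ 2 / (2 * a) :=
        (div_le_div_iff_of_pos_right h2a).mpr hIk2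
      have heq : e ^ 2 / (2 * a) + (T - 0) * (a / 2) = rT * e := by
        rw [hadef, sub_zero, ← hTsq]
        field_simp
        ring
      linarith
    calc ∫ τ in (0:ℝ)..T, hfun τ ≤ _ := hmono
      _ = _ := hcalc
      _ ≤ rT * e := hfin
      _ = b := by rw [hedef]; field_simp
  -- assemble
  have hgT : g T = U T (m 0 0) (m 0 1) := by rw [hgdef]; simp
  have hg0 : g 0 = U 0 (m T 0) (m T 1) := by rw [hgdef]; simp
  have hboundint : IntervalIntegrable
      (fun t => lam * M * (|s (T - t) 0 - sstar (T - t) 0| * m (T - t) 0 +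
        |s (T - t) 1 - sstar (T - t) 1| * m (T - t) 1)) volume 0 T := by
    apply ContinuousOn.intervalIntegrable; rw [huIcc]
    have hw : ContinuousOn (fun t : ℝ => T - t) (Icc 0 T) :=
      (continuous_const.sub continuous_id).continuousOn
    exact continuousOn_const.mul (hhcont.comp hw (fun u hu => hwmem u hu))
  have habsint : IntervalIntegrable (fun t => |G' t|) volume 0 T := by
    apply ContinuousOn.intervalIntegrable; rw [huIcc]; exact hG'cont.abs
  have hsub : ∫ t in (0:ℝ)..T, (fun t => lam * M * (|s (T - t) 0 - sstar (T - t) 0| * m (T - t) 0 +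
        |s (T - t) 1 - sstar (T - t) 1| * m (T - t) 1)) t
      = lam * M * ∫ τ in (0:ℝ)..T, hfun τ := by
    rw [← intervalIntegral.integral_const_mul]
    have := intervalIntegral.integral_comp_sub_left (a := (0:ℝ)) (b := T)
      (fun τ => lam * M * hfun τ) T
    simp only [sub_zero, sub_self] at this
    rw [← this]
  calc |U T (m 0 0) (m 0 1) - U 0 (m T 0) (m T 1)| = |g T - g 0| := by rw [hgT, hg0]
    _ = |∫ t in (0:ℝ)..T, G' t| := by rw [hFTC]
    _ ≤ ∫ t in (0:ℝ)..T, |G' t| := intervalIntegral.abs_integral_le_integral_abs hT.le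
    _ ≤ ∫ t in (0:ℝ)..T, lam * M * (|s (T - t) 0 - sstar (T - t) 0| * m (T - t) 0 +
        |s (T - t) 1 - sstar (T - t) 1| * m (T - t) 1) :=
        intervalIntegral.integral_mono_on hT.le habsint hboundint
          (fun t ht => hkey t ht)
    _ = lam * M * ∫ τ in (0:ℝ)..T, hfun τ := hsub
    _ ≤ lam * M * (rT * ε) := by
        apply mul_le_mul_of_nonneg_left hIh (by positivity)
    _ = lam * M * rT * ε := by ring
end
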